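/- arXiv:1503.04121 — 8 statements merged into one kernel-verified Lean document; each statement's English description precedes it below -/
import Mathlib

section
/- Let p ≥ 2 be a real number and let f be analytic on 𝔻. Fix r ∈ (0,1) and θ ∈ ℝ with f(r e^{iθ}) ≠ 0. Then the function φ ↦ |f(r e^{iφ})|^{p−2} f(r e^{iφ}) is differentiable at φ = θ, and the absolute value of its derivative at θ is at most (p − 1) |f(r e^{iθ})|^{p−2} · r · |f′(r e^{iθ})|. -/
open MeasureTheory Set

theorem stmt8 (p : ℝ) (hp : 2 ≤ p) (f : ℂ → ℂ)
    (hf : DifferentiableOn ℂ f (Metric.ball (0 : ℂ) 1))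
    (r θ : ℝ) (hr0 : 0 < r) (hr1 : r < 1)
    (hfz : f ((r : ℂ) * Complex.exp ((θ : ℂ) * Complex.I)) ≠ 0) :
    ∃ d : ℂ,
      HasDerivAt
        (fun φ : ℝ =>
          ((‖f ((r : ℂ) * Complex.exp ((φ : ℂ) * Complex.I))‖ ^ (p - 2) : ℝ) : ℂ) *
            f ((r : ℂ) * Complex.exp ((φ : ℂ) * Complex.I))) d θ ∧
      ‖d‖ ≤
        (p - 1) * ‖f ((r : ℂ) * Complex.exp ((θ : ℂ) * Complex.I))‖ ^ (p - 2) *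
          r * ‖deriv f ((r : ℂ) * Complex.exp ((θ : ℂ) * Complex.I))‖ := by
  set z : ℂ := (r : ℂ) * Complex.exp ((θ : ℂ) * Complex.I) with hzdef
  have habsz : ‖z‖ = r := by
    simp [hzdef, norm_mul, Complex.norm_exp_ofReal_mul_I, Complex.norm_real, abs_of_pos hr0]
  have hzball : z ∈ Metric.ball (0 : ℂ) 1 := by
    rw [mem_ball_zero_iff, habsz]; exact hr1
  -- derivative of the curve
  have h1 : HasDerivAt (fun φ : ℝ => ((φ : ℂ))) 1 θ :=
    (hasDerivAt_id θ).ofReal_comp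
  have hc : HasDerivAt (fun φ : ℝ => (r : ℂ) * Complex.exp ((φ : ℂ) * Complex.I))
      (z * Complex.I) θ := by
    have := (((h1.mul_const Complex.I).cexp).const_mul (r : ℂ))
    simpa [hzdef, mul_comm, mul_assoc, mul_left_comm] using this
  -- derivative of f at z
  have hfd : HasDerivAt f (deriv f z) z :=
    (hf.differentiableAt (Metric.isOpen_ball.mem_nhds hzball)).hasDerivAt
  set d1 : ℂ := deriv f z * (z * Complex.I) with hd1def
  set g : ℝ → ℂ := fun φ : ℝ => f ((r : ℂ) * Complex.exp ((φ : ℂ) * Complex.I)) with hgdef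
  have hg : HasDerivAt g d1 θ := hfd.comp θ hc
  have hgθ : g θ = f z := rfl
  set a : ℝ := ‖g θ‖ with hadef
  have ha : 0 < a := by
    rw [hadef]
    exact (norm_pos_iff.mpr (by rw [hgθ]; exact hfz))
  -- derivative of normSq ∘ g
  have hre : HasDerivAt (fun φ : ℝ => (g φ).re) d1.re θ :=
    Complex.reCLM.hasFDerivAt.comp_hasDerivAt θ hg
  have him : HasDerivAt (fun φ : ℝ => (g φ).im) d1.im θ :=
    Complex.imCLM.hasFDerivAt.comp_hasDerivAt θ hg
  set N : ℝ → ℝ := fun φ => Complex.normSq (g φ) with hNdef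
  set N' : ℝ := 2 * ((g θ).re * d1.re + (g θ).im * d1.im) with hN'def
  have hN : HasDerivAt N N' θ := by
    have h : HasDerivAt (fun φ : ℝ => (g φ).re * (g φ).re + (g φ).im * (g φ).im) _ θ :=
      (hre.mul hre).add (him.mul him)
    have heq : (fun φ : ℝ => (g φ).re * (g φ).re + (g φ).im * (g φ).im) = N := by
      funext φ; simp [hNdef, Complex.normSq_apply]
    rw [heq] at h
    convert h using 1
    rw [hN'def]; ring
  have hNθpos : 0 < N θ := by
    rw [hNdef]
    exact Complex.normSq_pos.mpr (by rw [hgθ]; exact hfz)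
  -- rpow derivative
  set e : ℝ := (p - 2) / 2 with hedef
  have hA : HasDerivAt (fun φ => N φ ^ e) (N' * e * N θ ^ (e - 1)) θ :=
    hN.rpow_const (Or.inl hNθpos.ne')
  -- the abs^(p-2) function equals N ^ e
  have hfun : (fun φ : ℝ => ‖g φ‖ ^ (p - 2)) = fun φ => N φ ^ e := by
    funext φ
    rw [hNdef]
    rw [Complex.norm_def, Real.sqrt_eq_rpow,
      ← Real.rpow_mul (Complex.normSq_nonneg _)]
    rw [hedef]
    congr 1
    ring
  set a' : ℝ := N' * e * N θ ^ (e - 1) with ha'def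
  have hAr : HasDerivAt (fun φ : ℝ => ‖g φ‖ ^ (p - 2)) a' θ := by
    rw [hfun]; exact hA
  have hAc : HasDerivAt (fun φ : ℝ => ((‖g φ‖ ^ (p - 2) : ℝ) : ℂ)) (a' : ℂ) θ :=
    hAr.ofReal_comp
  have hh : HasDerivAt
      (fun φ : ℝ => ((‖g φ‖ ^ (p - 2) : ℝ) : ℂ) * g φ)
      ((a' : ℂ) * g θ + ((‖g θ‖ ^ (p - 2) : ℝ) : ℂ) * d1) θ := hAc.mul hg
  set Y : ℝ := ‖d1‖ with hYdef
  have hY0 : 0 ≤ Y := norm_nonneg _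
  have hd1abs : Y = r * ‖deriv f z‖ := by
    rw [hYdef, hd1def, norm_mul, norm_mul, habsz, Complex.norm_I, mul_one, mul_comm]
  have hNθ : N θ = a * a := by
    show Complex.normSq (g θ) = a * a
    rw [hadef, ← Complex.sq_norm]; ring
  have hNe : N θ ^ e = a ^ (p - 2) := by
    show Complex.normSq (g θ) ^ e = a ^ (p - 2)
    rw [← Complex.sq_norm, ← hadef, ← Real.rpow_natCast a 2,
      ← Real.rpow_mul ha.le]
    congr 1
    rw [hedef]; push_cast; ring
  have hmul : N θ ^ (e - 1) * N θ = a ^ (p - 2) := by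
    calc N θ ^ (e - 1) * N θ = N θ ^ (e - 1) * N θ ^ (1 : ℝ) := by rw [Real.rpow_one]
      _ = N θ ^ (e - 1 + 1) := (Real.rpow_add hNθpos _ _).symm
      _ = N θ ^ e := by ring_nf
      _ = a ^ (p - 2) := hNe
  have hN'bound : |N'| ≤ 2 * a * Y := by
    have h1 : (g θ).re * d1.re + (g θ).im * d1.im = ((starRingEnd ℂ) (g θ) * d1).re := by
      simp [Complex.mul_re]
    have h2 : |((starRingEnd ℂ) (g θ) * d1).re| ≤ a * Y := by
      refine (Complex.abs_re_le_norm _).trans ?_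
      rw [norm_mul, Complex.norm_conj, ← hadef, ← hYdef]
    calc |N'| = 2 * |((starRingEnd ℂ) (g θ) * d1).re| := by
          rw [hN'def, h1, abs_mul]; norm_num
      _ ≤ 2 * (a * Y) := by linarith
      _ = 2 * a * Y := by ring
  have he0 : 0 ≤ e := by rw [hedef]; linarith
  have hP0 : 0 ≤ N θ ^ (e - 1) := Real.rpow_nonneg hNθpos.le _
  have hkey : |a'| * a ≤ (p - 2) * a ^ (p - 2) * Y := by
    have hb : |a'| ≤ 2 * a * Y * e * N θ ^ (e - 1) := by
      rw [ha'def, abs_mul, abs_mul, abs_of_nonneg he0, abs_of_nonneg hP0]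
      exact mul_le_mul_of_nonneg_right
        (mul_le_mul_of_nonneg_right hN'bound he0) hP0
    calc |a'| * a ≤ 2 * a * Y * e * N θ ^ (e - 1) * a := mul_le_mul_of_nonneg_right hb ha.le
      _ = (2 * e) * (N θ ^ (e - 1) * (a * a)) * Y := by ring
      _ = (p - 2) * a ^ (p - 2) * Y := by
          rw [← hNθ, hmul, hedef]; ring
  refine ⟨_, hh, ?_⟩
  have hX0 : 0 ≤ a ^ (p - 2) := Real.rpow_nonneg (norm_nonneg _) _
  calc ‖(a' : ℂ) * g θ + ((‖g θ‖ ^ (p - 2) : ℝ) : ℂ) * d1‖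
      ≤ |a'| * a + a ^ (p - 2) * Y := by
        refine (norm_add_le _ _).trans ?_
        rw [norm_mul, norm_mul, Complex.norm_real, Complex.norm_real, Real.norm_eq_abs, Real.norm_eq_abs,
          abs_of_nonneg (Real.rpow_nonneg (norm_nonneg _) _), ← hadef, ← hYdef]
    _ ≤ (p - 2) * a ^ (p - 2) * Y + a ^ (p - 2) * Y := by
        exact add_le_add_left hkey _
    _ = (p - 1) * a ^ (p - 2) * Y := by ring
    _ = (p - 1) * a ^ (p - 2) * r * ‖deriv f z‖ := by
        rw [hd1abs]; ring
end

section
/- Let b : ℕ → ℝ satisfy b₀ = 0, b is strictly increasing, bⱼ < 1 for all j, and bⱼ → 1 as j → ∞. Let (m_j)_{j≥1} be a strictly increasing sequence of non-negative integers such that ∫_{b_{j−1}}^{b_j} (m_j + 1) r^{m_j + 1} dr ≥ 1/4 for all j ≥ 1. Let (c_j)_{j≥1} be a bounded sequence of complex numbers with Σ_{j≥1} |c_j|² = ∞. Define f : 𝔻 → ℂ by f(z) = c_j (z/|z|)^{m_j} when b_{j−1} ≤ |z| < b_j and z ≠ 0, and f(0) = 0. Then f is bounded and measurable on 𝔻,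 and the Taylor coefficients of 𝒫f at 0 are not square-summable; that is, Σ_{n≥0} |(𝒫f)^{(n)}(0)/n!|² = ∞ (so 𝒫f does not lie in the Hardy space H²). -/
open MeasureTheory Set Filter

/-- The Bergman projection of a function `f` on the unit disc. -/
noncomputable def bergman (f : ℂ → ℂ) (z : ℂ) : ℂ :=
  (1 / (Real.pi : ℂ)) * ∫ w in Metric.ball (0 : ℂ) 1, f w / (1 - (starRingEnd ℂ) w * z) ^ 2

open Real in
lemma ang_int (k : ℤ) :
    (∫ θ in Set.Ioo (-π) π, Complex.exp (k * θ * Complex.I)) =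
      if k = 0 then ((2 * π : ℝ) : ℂ) else 0 := by
  have hle : -π ≤ π := by linarith [Real.pi_pos]
  rw [← MeasureTheory.integral_Ioc_eq_integral_Ioo,
      ← intervalIntegral.integral_of_le hle]
  split_ifs with hk
  · subst hk
    simp only [Int.cast_zero, zero_mul, Complex.exp_zero]
    rw [intervalIntegral.integral_const]
    rw [sub_neg_eq_add, Complex.real_smul, mul_one]
    push_cast
    ring
  · have hc : (k : ℂ) * Complex.I ≠ 0 := by
      simp [Complex.I_ne_zero, hk]
    have : ∀ θ : ℝ, (k : ℂ) * θ * Complex.I = ((k : ℂ) * Complex.I) * θ := by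
      intro θ; ring
    simp_rw [this]
    rw [integral_exp_mul_complex hc]
    have h1 : (k : ℂ) * Complex.I * ↑π = (k:ℂ) * Complex.I * ↑(-π : ℝ) + (k:ℤ) * (2 * π * Complex.I) := by
      push_cast; ring
  
    rw [h1, Complex.exp_add, Complex.exp_int_mul_two_pi_mul_I, mul_one, sub_self, zero_div]

lemma ann_meas (s t : ℝ) :
    MeasurableSet {w : ℂ | w ≠ 0 ∧ s ≤ ‖w‖ ∧ ‖w‖ < t} := by
  apply MeasurableSet.inter
  · exact (measurableSet_singleton (0:ℂ)).compl
  · exact MeasurableSet.inter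
      (measurableSet_le measurable_const continuous_norm.measurable)
      (measurableSet_lt continuous_norm.measurable measurable_const)

open Real in
lemma annulus_integral (s t : ℝ) (h0 : 0 ≤ s) (hst : s ≤ t) (μ n : ℕ) :
    (∫ w in {w : ℂ | w ≠ 0 ∧ s ≤ ‖w‖ ∧ ‖w‖ < t},
      (w / (‖w‖ : ℂ)) ^ μ * (starRingEnd ℂ w) ^ n) =
    if μ = n then ((2 * π : ℝ) : ℂ) * ((∫ r in s..t, r ^ (n + 1)) : ℝ) else 0 := by
  set A : Set ℂ := {w : ℂ | w ≠ 0 ∧ s ≤ ‖w‖ ∧ ‖w‖ < t} with hA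
  set g : ℂ → ℂ := fun w => (w / (‖w‖ : ℂ)) ^ μ * (starRingEnd ℂ w) ^ n with hg
  set k : ℤ := (μ : ℤ) - (n : ℤ) with hk
  set F : ℝ × ℝ → ℂ := fun p => ((p.1 : ℂ) ^ (n + 1)) * Complex.exp (k * p.2 * Complex.I)
    with hF
  have step1 : (∫ w in A, g w) = ∫ w, A.indicator g w := (integral_indicator (ann_meas s t)).symm
  have step2 : (∫ w, A.indicator g w) =
      ∫ p in polarCoord.target, p.1 • A.indicator g (Complex.polarCoord.symm p) :=
    (Complex.integral_comp_polarCoord_symm (A.indicator g)).symm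
  have step3 : (∫ p in polarCoord.target, p.1 • A.indicator g (Complex.polarCoord.symm p)) =
      ∫ p in polarCoord.target, (Ico s t ×ˢ (univ : Set ℝ)).indicator F p := by
    apply setIntegral_congr_fun (polarCoord.open_target.measurableSet)
    rintro ⟨r, θ⟩ hp
    rw [polarCoord_target] at hp
    obtain ⟨hr, hθ⟩ := hp
    simp only [mem_Ioi] at hr
    have hw : Complex.polarCoord.symm (r, θ) = (r : ℂ) * Complex.exp (θ * Complex.I) := by
      rw [Complex.polarCoord_symm_apply, Complex.exp_mul_I]
      simp [Complex.ofReal_cos, Complex.ofReal_sin]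
    have habs : ‖Complex.polarCoord.symm (r, θ)‖ = r := by
      rw [Complex.norm_polarCoord_symm, abs_of_pos hr]
    dsimp only
    by_cases hmem : s ≤ r ∧ r < t
    · have hwA : Complex.polarCoord.symm (r, θ) ∈ A := by
        refine ⟨?_, by rw [habs]; exact hmem.1, by rw [habs]; exact hmem.2⟩
        intro h0'
        rw [h0', norm_zero] at habs
        exact hr.ne habs
      rw [indicator_of_mem hwA, indicator_of_mem (by exact ⟨hmem, mem_univ _⟩)]
      rw [hg]
      simp only
      rw [habs, hw]
      have hrne : (r : ℂ) ≠ 0 := Complex.ofReal_ne_zero.mpr hr.ne'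
      have hdiv : (r : ℂ) * Complex.exp (θ * Complex.I) / (r : ℂ) = Complex.exp (θ * Complex.I) := by
        field_simp
      rw [hdiv]
      have hconj : (starRingEnd ℂ) ((r : ℂ) * Complex.exp (θ * Complex.I)) =
          (r : ℂ) * Complex.exp (-θ * Complex.I) := by
        rw [map_mul, Complex.conj_ofReal, ← Complex.exp_conj]
        congr 1
        simp [Complex.conj_I]
      rw [hconj, mul_pow, ← Complex.exp_nat_mul, ← Complex.exp_nat_mul, Complex.real_smul]
      have hexp : Complex.exp ((μ:ℂ) * (↑θ * Complex.I)) *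
          Complex.exp ((n:ℂ) * (-↑θ * Complex.I)) = Complex.exp ((k:ℂ) * ↑θ * Complex.I) := by
        rw [← Complex.exp_add]
        congr 1
        rw [hk]; push_cast; ring
      rw [hF]
      dsimp only
      rw [pow_succ]
      linear_combination ((r:ℂ) * (r:ℂ) ^ n) * hexp
    · have hwA : Complex.polarCoord.symm (r, θ) ∉ A := by
        intro hmemA
        rw [hA] at hmemA
        exact hmem ⟨by rw [← habs]; exact hmemA.2.1, by rw [← habs]; exact hmemA.2.2⟩
      rw [indicator_of_notMem hwA, indicator_of_notMem (by simp [hmem])]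
      simp
  have step4 : (∫ p in polarCoord.target, (Ico s t ×ˢ (univ : Set ℝ)).indicator F p) =
      ∫ p in (Ioi (0:ℝ) ∩ Ico s t) ×ˢ Ioo (-π) π, F p := by
    rw [setIntegral_indicator (measurableSet_Ico.prod MeasurableSet.univ), polarCoord_target,
      prod_inter_prod, inter_univ]
  have hae : ((Ioi (0:ℝ) ∩ Ico s t) ×ˢ Ioo (-π) π : Set (ℝ × ℝ)) =ᵐ[volume]
      (Ioo s t ×ˢ Ioo (-π) π : Set (ℝ × ℝ)) := by
    have hsub : symmDiff ((Ioi (0:ℝ) ∩ Ico s t) ×ˢ Ioo (-π) π) (Ioo s t ×ˢ Ioo (-π) π) ⊆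
        ({s} ×ˢ (univ : Set ℝ)) ∪ ({0} ×ˢ (univ : Set ℝ)) := by
      rintro ⟨x, y⟩ hxy
      rw [Set.mem_symmDiff] at hxy
      rcases hxy with ⟨h1, h2⟩ | ⟨h1, h2⟩
      · obtain ⟨⟨hx0, hx1, hx2⟩, hy⟩ := h1
        left
        refine ⟨?_, mem_univ _⟩
        simp only [mem_singleton_iff]
        by_contra hxs
        exact h2 ⟨⟨lt_of_le_of_ne hx1 (Ne.symm hxs), hx2⟩, hy⟩
      · obtain ⟨⟨hx1, hx2⟩, hy⟩ := h1
        exact absurd ⟨⟨lt_of_le_of_lt h0 hx1, le_of_lt hx1, hx2⟩, hy⟩ h2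
    refine measure_symmDiff_eq_zero_iff.mp (measure_mono_null hsub ?_)
    rw [Measure.volume_eq_prod ℝ ℝ]
    apply measure_union_null
    · rw [Measure.prod_prod]; simp
    · rw [Measure.prod_prod]; simp
  have step5 : (∫ p in (Ioi (0:ℝ) ∩ Ico s t) ×ˢ Ioo (-π) π, F p) =
      ∫ p in (Ioo s t ×ˢ Ioo (-π) π : Set (ℝ × ℝ)), F p := setIntegral_congr_set hae
  have step6 : (∫ p in (Ioo s t ×ˢ Ioo (-π) π : Set (ℝ × ℝ)), F p) =
      (∫ r in Ioo s t, ((r:ℂ)^(n+1))) * ∫ θ in Ioo (-π) π, Complex.exp (k * θ * Complex.I) := by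
    rw [hF, Measure.volume_eq_prod ℝ ℝ, ← Measure.prod_restrict]
    exact integral_prod_mul (fun r : ℝ => (r:ℂ)^(n+1)) (fun θ : ℝ => Complex.exp (k * θ * Complex.I))
  have hrad : (∫ r in Ioo s t, ((r:ℂ)^(n+1))) = ((∫ r in s..t, r ^ (n + 1)) : ℝ) := by
    rw [← MeasureTheory.integral_Ioc_eq_integral_Ioo, ← intervalIntegral.integral_of_le hst]
    simp_rw [show (fun r : ℝ => (r:ℂ)^(n+1)) = fun r : ℝ => ((r^(n+1) : ℝ) : ℂ) by
      funext r; push_cast; ring]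
    exact intervalIntegral.integral_ofReal
  rw [step1, step2, step3, step4, step5, step6, hrad, ang_int]
  by_cases hμn : μ = n
  · have : k = 0 := by rw [hk, hμn]; ring
    rw [if_pos this, if_pos hμn]; ring
  · have : k ≠ 0 := by
      rw [hk]; intro h; apply hμn; exact_mod_cast sub_eq_zero.mp h
    rw [if_neg this, if_neg hμn]; ring

lemma hasSum_aux {x : ℂ} (hx : ‖x‖ < 1) :
    HasSum (fun n : ℕ => ((n:ℂ)+1) * x^n) (1/(1-x)^2) := by
  have hne : (1:ℂ) - x ≠ 0 := by
    intro h; rw [sub_eq_zero] at h; rw [← h] at hx; simp at hx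
  have h3 := (hasSum_coe_mul_geometric_of_norm_lt_one hx).add (hasSum_geometric_of_norm_lt_one hx)
  have : x / (1-x)^2 + (1-x)⁻¹ = 1/(1-x)^2 := by field_simp; ring
  rw [this] at h3
  convert h3 using 2 with n
  · exact rfl
  ring

theorem stmt9 (b : ℕ → ℝ) (m : ℕ → ℕ) (c : ℕ → ℂ)
    (hb0 : b 0 = 0) (hbmono : StrictMono b) (hblt : ∀ j, b j < 1)
    (hbtend : Tendsto b atTop (nhds 1))
    (hmmono : ∀ j : ℕ, 1 ≤ j → m j < m (j + 1))
    (hmint : ∀ j : ℕ, 1 ≤ j →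
      (1 : ℝ) / 4 ≤ ∫ r in (b (j - 1))..(b j), ((m j : ℝ) + 1) * r ^ (m j + 1))
    (hcbd : ∃ B : ℝ, ∀ j, ‖c j‖ ≤ B)
    (hcsum : ¬ Summable (fun j : ℕ => ‖c (j + 1)‖ ^ 2))
    (f : ℂ → ℂ) (hf0 : f 0 = 0)
    (hfval : ∀ z : ℂ, z ≠ 0 → ∀ j : ℕ, 1 ≤ j →
      b (j - 1) ≤ ‖z‖ → ‖z‖ < b j →
      f z = c j * (z / (‖z‖ : ℂ)) ^ (m j)) :
    (∃ B : ℝ, ∀ z ∈ Metric.ball (0 : ℂ) 1, ‖f z‖ ≤ B) ∧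
    Measurable ((Metric.ball (0 : ℂ) 1).indicator f) ∧
    ¬ Summable (fun n : ℕ =>
        ‖iteratedDeriv n (bergman f) 0 / (Nat.factorial n : ℂ)‖ ^ 2) := by
  classical
  obtain ⟨B, hB⟩ := hcbd
  set B₀ : ℝ := max B 0 with hB₀def
  have hB₀ : ∀ j, ‖c j‖ ≤ B₀ := fun j => (hB j).trans (le_max_left _ _)
  have hB₀0 : 0 ≤ B₀ := le_max_right _ _
  have hbnn : ∀ k, 0 ≤ b k := fun k => hb0 ▸ hbmono.monotone (Nat.zero_le k)
  -- index function
  have hex : ∀ z : ℂ, ∃ n : ℕ, ‖z‖ < b n ∨ 1 ≤ ‖z‖ := by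
    intro z
    rcases lt_or_ge (‖z‖) 1 with h | h
    · exact ((hbtend.eventually (eventually_gt_nhds h)).exists).imp (fun n hn => Or.inl hn)
    · exact ⟨0, Or.inr h⟩
  have hJprops : ∀ z : ℂ, z ≠ 0 → ‖z‖ < 1 →
      1 ≤ Nat.find (hex z) ∧ b (Nat.find (hex z) - 1) ≤ ‖z‖ ∧
        ‖z‖ < b (Nat.find (hex z)) := by
    intro z hz0 hz1
    have hspec := Nat.find_spec (hex z)
    have hlt : ‖z‖ < b (Nat.find (hex z)) := by
      rcases hspec with h | h
      · exact h
      · linarith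
    have h1 : 1 ≤ Nat.find (hex z) := by
      rcases Nat.eq_zero_or_pos (Nat.find (hex z)) with h0 | h0
      · exfalso
        rw [h0, hb0] at hlt
        have := norm_pos_iff.mpr hz0
        linarith
      · exact h0
    refine ⟨h1, ?_, hlt⟩
    have hmin := Nat.find_min (hex z) (Nat.sub_lt h1 one_pos)
    push_neg at hmin
    exact hmin.1
  have hfz : ∀ z : ℂ, z ≠ 0 → ‖z‖ < 1 →
      f z = c (Nat.find (hex z)) * (z / (‖z‖ : ℂ)) ^ (m (Nat.find (hex z))) := by
    intro z hz0 hz1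
    obtain ⟨h1, h2, h3⟩ := hJprops z hz0 hz1
    exact hfval z hz0 _ h1 h2 h3
  have hdivabs : ∀ z : ℂ, z ≠ 0 → ‖z / (‖z‖ : ℂ)‖ = 1 := by
    intro z hz
    rw [norm_div, Complex.norm_real, Real.norm_eq_abs, abs_of_pos (norm_pos_iff.mpr hz),
      div_self (norm_ne_zero_iff.mpr hz)]
  have hbound : ∀ z ∈ Metric.ball (0:ℂ) 1, ‖f z‖ ≤ B₀ := by
    intro z hz
    rw [mem_ball_zero_iff] at hz
    by_cases hz0 : z = 0
    · simp [hz0, hf0, hB₀0]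
    · rw [hfz z hz0 hz, norm_mul, norm_pow, hdivabs z hz0, one_pow, mul_one]
      exact hB₀ _
  -- measurability
  have hGmeas : ∀ n : ℕ, Measurable (fun z : ℂ =>
      if z ∈ Metric.ball (0:ℂ) 1 ∧ z ≠ 0 then c n * (z / (‖z‖ : ℂ))^(m n) else 0) := by
    intro n
    apply Measurable.ite
    · exact measurableSet_ball.inter (measurableSet_singleton 0).compl
    · exact measurable_const.mul ((measurable_id.div
        (Complex.continuous_ofReal.measurable.comp continuous_norm.measurable)).pow_const _)
    · exact measurable_const
  have hpmeas : ∀ n : ℕ, MeasurableSet {z : ℂ | ‖z‖ < b n ∨ 1 ≤ ‖z‖} := by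
    intro n
    exact (measurableSet_lt continuous_norm.measurable measurable_const).union
      (measurableSet_le measurable_const continuous_norm.measurable)
  have hmeasind : Measurable ((Metric.ball (0:ℂ) 1).indicator f) := by
    have hfind := Measurable.find hGmeas hpmeas hex
    convert hfind using 1
    funext z
    by_cases hzb : z ∈ Metric.ball (0:ℂ) 1
    · rw [indicator_of_mem hzb]
      by_cases hz0 : z = 0
      · rw [if_neg (fun h => h.2 hz0), hz0, hf0]
      · rw [if_pos ⟨hzb, hz0⟩]
        exact hfz z hz0 (by exact mem_ball_zero_iff.mp hzb)
    · rw [indicator_of_notMem hzb, if_neg (fun h => hzb h.1)]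
  have hfae : AEStronglyMeasurable f (volume.restrict (Metric.ball (0:ℂ) 1)) := by
    refine ⟨(Metric.ball (0:ℂ) 1).indicator f, hmeasind.stronglyMeasurable, ?_⟩
    filter_upwards [ae_restrict_mem measurableSet_ball] with z hz
    exact (indicator_of_mem hz f).symm
  set V : ℝ := (volume (Metric.ball (0:ℂ) 1)).toReal with hV
  have hVlt : volume (Metric.ball (0:ℂ) 1) < ⊤ := measure_ball_lt_top
  have hV0 : 0 ≤ V := ENNReal.toReal_nonneg
  set Iint : ℕ → ℂ := fun n => ∫ w in Metric.ball (0:ℂ) 1, f w * (starRingEnd ℂ) w ^ n with hIdef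
  set a : ℕ → ℂ := fun n => (((n:ℂ) + 1) / (Real.pi:ℂ)) * Iint n with hadef
  have hintbd : ∀ n : ℕ, ∀ w ∈ Metric.ball (0:ℂ) 1,
      ‖f w * (starRingEnd ℂ) w ^ n‖ ≤ B₀ := by
    intro n w hw
    rw [norm_mul, norm_pow, RCLike.norm_conj]
    have h1 : ‖f w‖ ≤ B₀ := hbound w hw
    have h2 : ‖w‖ < 1 := mem_ball_zero_iff.mp hw
    have h3 : ‖w‖ ^ n ≤ 1 := pow_le_one₀ (norm_nonneg _) h2.le
    calc ‖f w‖ * ‖w‖ ^ n ≤ B₀ * 1 :=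
          mul_le_mul h1 h3 (pow_nonneg (norm_nonneg _) n) hB₀0
      _ = B₀ := mul_one _
  have hconjmeas : ∀ n : ℕ, AEStronglyMeasurable (fun w : ℂ => f w * (starRingEnd ℂ) w ^ n)
      (volume.restrict (Metric.ball (0:ℂ) 1)) := by
    intro n
    exact hfae.mul ((Complex.continuous_conj.pow n).aestronglyMeasurable)
  have hIbdd : ∀ n, ‖Iint n‖ ≤ B₀ * V := by
    intro n
    exact norm_setIntegral_le_of_norm_le_const hVlt (hintbd n)
  have hπ : (Real.pi : ℂ) ≠ 0 := Complex.ofReal_ne_zero.mpr Real.pi_ne_zero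
  have hanorm : ∀ n : ℕ, ‖a n‖ ≤ ((n:ℝ)+1) * (B₀ * V / Real.pi) := by
    intro n
    rw [hadef]
    simp only
    rw [norm_mul, norm_div]
    have h1 : ‖((n:ℂ) + 1)‖ = (n:ℝ) + 1 := by
      rw [show ((n:ℂ) + 1) = ((n+1 : ℕ) : ℂ) by push_cast; ring, Complex.norm_natCast]
      push_cast; ring
    have h2 : ‖(Real.pi : ℂ)‖ = Real.pi := by
      rw [Complex.norm_real, Real.norm_eq_abs, abs_of_pos Real.pi_pos]
    rw [h1, h2]
    calc ((n:ℝ)+1)/Real.pi * ‖Iint n‖ ≤ ((n:ℝ)+1)/Real.pi * (B₀ * V) := by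
          have hp : (0:ℝ) ≤ ((n:ℝ)+1)/Real.pi := by positivity
          exact mul_le_mul_of_nonneg_left (hIbdd n) hp
      _ = ((n:ℝ)+1) * (B₀ * V / Real.pi) := by ring
  set p : FormalMultilinearSeries ℂ ℂ ℂ := FormalMultilinearSeries.ofScalars ℂ a with hpdef
  have hpnorm : ∀ n, ‖p n‖ = ‖a n‖ := by
    intro n
    rw [hpdef, FormalMultilinearSeries.ofScalars_norm]
  have hpow_aux : ∀ n : ℕ, ((n:ℝ)+1) * (2⁻¹ : ℝ)^n ≤ 1 := by
    intro n
    have h1 : ((n:ℝ)+1) ≤ 2^n := by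
      exact_mod_cast Nat.lt_two_pow_self (n := n)
    have h2 : (0:ℝ) < 2^n := by positivity
    rw [show (2⁻¹:ℝ)^n = (2^n)⁻¹ by rw [inv_pow]]
    rw [mul_inv_le_iff₀ h2, one_mul]
    exact h1
  have hrle : ((2⁻¹ : NNReal) : ENNReal) ≤ p.radius := by
    apply FormalMultilinearSeries.le_radius_of_bound _ (B₀ * V / Real.pi)
    intro n
    rw [hpnorm]
    have hC0 : 0 ≤ B₀ * V / Real.pi := by positivity
    have hcoe : ((2⁻¹ : NNReal) : ℝ) = (2⁻¹ : ℝ) := by norm_num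
    rw [hcoe]
    calc ‖a n‖ * (2⁻¹:ℝ)^n ≤ (((n:ℝ)+1) * (B₀ * V / Real.pi)) * (2⁻¹:ℝ)^n := by
          gcongr
          exact hanorm n
      _ = (((n:ℝ)+1) * (2⁻¹:ℝ)^n) * (B₀ * V / Real.pi) := by ring
      _ ≤ 1 * (B₀ * V / Real.pi) := by
          gcongr
          exact hpow_aux n
      _ = B₀ * V / Real.pi := one_mul _
  have hps : HasFPowerSeriesOnBall (bergman f) p 0 ((2⁻¹ : NNReal) : ENNReal) := by
    refine ⟨hrle, by norm_num, ?_⟩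
    intro y hy
    rw [EMetric.mem_ball, edist_zero_right] at hy
    have hy2 : ‖y‖ ≤ 2⁻¹ := by
      have h1 : ‖y‖₊ < (2⁻¹ : NNReal) := by exact_mod_cast hy
      have h2 : (‖y‖₊ : ℝ) < ((2⁻¹ : NNReal) : ℝ) := by exact_mod_cast h1
      rw [coe_nnnorm] at h2
      calc ‖y‖ ≤ ((2⁻¹ : NNReal) : ℝ) := h2.le
        _ = 2⁻¹ := by norm_num
    set μb := volume.restrict (Metric.ball (0:ℂ) 1) with hμb
    haveI : IsFiniteMeasure μb := by
      constructor
      rw [hμb, Measure.restrict_apply_univ]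
      exact hVlt
    set F : ℕ → ℂ → ℂ := fun n w => f w * (((n:ℂ)+1) * ((starRingEnd ℂ) w * y)^n) with hFdef
    have hFmeas : ∀ n, AEStronglyMeasurable (F n) μb := by
      intro n
      refine hfae.mul (Continuous.aestronglyMeasurable ?_)
      exact continuous_const.mul ((Complex.continuous_conj.mul continuous_const).pow n)
    have hFbd : ∀ n : ℕ, ∀ w ∈ Metric.ball (0:ℂ) 1, ‖F n w‖ ≤ B₀ * (((n:ℝ)+1) * 2⁻¹^n) := by
      intro n w hw
      rw [hFdef]
      simp only
      rw [norm_mul, norm_mul]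
      have h1 : ‖f w‖ ≤ B₀ := hbound w hw
      have h2 : ‖((n:ℂ)+1)‖ = (n:ℝ)+1 := by
        rw [show ((n:ℂ) + 1) = ((n+1 : ℕ) : ℂ) by push_cast; ring, Complex.norm_natCast]
        push_cast; ring
      have h3 : ‖((starRingEnd ℂ) w * y)^n‖ ≤ 2⁻¹^n := by
        rw [norm_pow]
        apply pow_le_pow_left₀ (norm_nonneg _)
        rw [norm_mul, RCLike.norm_conj]
        have hw1 : ‖w‖ < 1 := mem_ball_zero_iff.mp hw
        calc ‖w‖ * ‖y‖ ≤ 1 * 2⁻¹ :=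
              mul_le_mul hw1.le hy2 (norm_nonneg _) zero_le_one
          _ = 2⁻¹ := one_mul _
      rw [h2]
      exact mul_le_mul h1 (mul_le_mul_of_nonneg_left h3 (by positivity)) (by positivity) hB₀0
    have hFint : ∀ n, Integrable (F n) μb := by
      intro n
      apply Integrable.mono' (integrable_const (B₀ * (((n:ℝ)+1) * 2⁻¹^n))) (hFmeas n)
      rw [hμb]
      filter_upwards [ae_restrict_mem measurableSet_ball] with w hw
      exact hFbd n w hw
    have hgeom : Summable (fun n : ℕ => ((n:ℝ)+1) * 2⁻¹^n) := by
      have h1 : Summable (fun n : ℕ => (n:ℝ) * 2⁻¹^n) := by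
        have := summable_pow_mul_geometric_of_norm_lt_one (R := ℝ) 1 (r := 2⁻¹)
          (by rw [Real.norm_eq_abs, abs_of_nonneg (by norm_num : (0:ℝ) ≤ 2⁻¹)]; norm_num)
        simpa using this
      have h2 : Summable (fun n : ℕ => (2⁻¹:ℝ)^n) := summable_geometric_of_lt_one
        (by norm_num) (by norm_num)
      have := h1.add h2
      apply this.congr
      intro n
      ring
    have hFsumnorm : Summable (fun n => ∫ w, ‖F n w‖ ∂μb) := by
      apply Summable.of_nonneg_of_le (fun n => integral_nonneg (fun w => norm_nonneg _))
        (fun n => ?_) ((hgeom.mul_left B₀).mul_right V)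
      have hle : ∫ w, ‖F n w‖ ∂μb ≤ ∫ _, (B₀ * (((n:ℝ)+1) * 2⁻¹^n)) ∂μb := by
        apply integral_mono_of_nonneg
        · exact Eventually.of_forall (fun w => norm_nonneg _)
        · exact integrable_const _
        · rw [hμb]
          filter_upwards [ae_restrict_mem measurableSet_ball] with w hw
          exact hFbd n w hw
      refine hle.trans (le_of_eq ?_)
      rw [integral_const, hμb, measureReal_restrict_apply_univ, measureReal_def, smul_eq_mul, mul_comm]
    have hkey := hasSum_integral_of_summable_integral_norm hFint hFsumnorm
    have htsum : (∫ w, (∑' n, F n w) ∂μb) =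
        ∫ w in Metric.ball (0:ℂ) 1, f w / (1 - (starRingEnd ℂ) w * y)^2 := by
      apply integral_congr_ae
      rw [hμb]
      filter_upwards [ae_restrict_mem measurableSet_ball] with w hw
      have hx : ‖(starRingEnd ℂ) w * y‖ < 1 := by
        rw [norm_mul, RCLike.norm_conj]
        have hw1 : ‖w‖ < 1 := mem_ball_zero_iff.mp hw
        calc ‖w‖ * ‖y‖ ≤ ‖w‖ * 2⁻¹ := by
              apply mul_le_mul_of_nonneg_left hy2 (norm_nonneg _)
          _ < 1 := by nlinarith [norm_nonneg w]
      have hs := (hasSum_aux hx).mul_left (f w)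
      rw [hFdef]
      have heq : (∑' n : ℕ, f w * (((n:ℂ)+1) * ((starRingEnd ℂ) w * y)^n)) =
          f w * (1/(1 - (starRingEnd ℂ) w * y)^2) := hs.tsum_eq
      rw [heq, mul_one_div]
    have hterm : ∀ n : ℕ, (p n fun _ => y) = (1/(Real.pi:ℂ)) * ∫ w, F n w ∂μb := by
      intro n
      rw [hpdef, FormalMultilinearSeries.ofScalars_apply_eq, smul_eq_mul]
      have h1 : (∫ w, F n w ∂μb) = (((n:ℂ)+1) * y^n) * Iint n := by
        rw [hIdef, hμb]
        simp only
        rw [← MeasureTheory.integral_const_mul]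
        apply integral_congr_ae
        apply Eventually.of_forall
        intro w
        rw [hFdef]
        simp only
        rw [mul_pow]
        ring
      rw [h1, hadef]
      simp only
      field_simp
    have hfinal : (fun n => (p n fun _ => y)) = fun n => (1/(Real.pi:ℂ)) * ∫ w, F n w ∂μb := by
      exact funext hterm
    rw [hfinal, zero_add]
    show HasSum _ ((1 / (Real.pi : ℂ)) *
      ∫ w in Metric.ball (0 : ℂ) 1, f w / (1 - (starRingEnd ℂ) w * y) ^ 2)
    rw [← htsum]
    exact hkey.mul_left _
  -- iterated derivatives
  have hiter : ∀ n : ℕ, iteratedDeriv n (bergman f) 0 = (n.factorial : ℂ) * a n := by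
    intro n
    rw [iteratedDeriv_eq_iteratedFDeriv, ← hps.factorial_smul 1 n, hpdef,
      FormalMultilinearSeries.ofScalars_apply_eq]
    rw [one_pow, smul_eq_mul, mul_one, nsmul_eq_mul]
  -- annuli decomposition
  set A : ℕ → Set ℂ := fun k => {w : ℂ | w ≠ 0 ∧ b k ≤ ‖w‖ ∧ ‖w‖ < b (k+1)}
    with hAdef
  have hAm : ∀ k, MeasurableSet (A k) := fun k => ann_meas _ _
  have hAd' : ∀ i j : ℕ, i < j → Disjoint (A i) (A j) := by
    intro i j h
    apply Set.disjoint_left.mpr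
    rintro w ⟨_, _, hw2⟩ ⟨_, hw3, _⟩
    have hle : b (i+1) ≤ b j := hbmono.monotone h
    linarith
  have hAd : Pairwise (Function.onFun Disjoint A) := by
    intro i j hij
    rcases lt_or_gt_of_ne hij with h | h
    · exact hAd' i j h
    · exact (hAd' j i h).symm
  have hAsub : ∀ k, A k ⊆ Metric.ball (0:ℂ) 1 := by
    intro k w hw
    rw [mem_ball_zero_iff]
    exact lt_trans hw.2.2 (hblt _)
  have hAun : (⋃ k, A k) = Metric.ball (0:ℂ) 1 \ {0} := by
    apply Subset.antisymm
    · intro w hw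
      rw [mem_iUnion] at hw
      obtain ⟨k, hk⟩ := hw
      exact ⟨hAsub k hk, hk.1⟩
    · rintro w ⟨hw1, hw2⟩
      rw [mem_iUnion]
      rw [mem_singleton_iff] at hw2
      have hw1' : ‖w‖ < 1 := by
        exact mem_ball_zero_iff.mp hw1
      obtain ⟨h1, h2, h3⟩ := hJprops w hw2 hw1'
      refine ⟨Nat.find (hex w) - 1, hw2, h2, ?_⟩
      have hsp : Nat.find (hex w) - 1 + 1 = Nat.find (hex w) := by omega
      rw [hsp]
      exact h3
  have hIeq : ∀ n : ℕ, Iint n = ∑' k, ∫ w in A k, f w * (starRingEnd ℂ) w ^ n := by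
    intro n
    have h0 : Iint n = ∫ w in Metric.ball (0:ℂ) 1 \ {0}, f w * (starRingEnd ℂ) w ^ n := by
      rw [hIdef]
      refine (setIntegral_congr_set ?_).symm
      exact diff_ae_eq_self.mpr (measure_mono_null inter_subset_right (measure_singleton 0))
    rw [h0, ← hAun]
    apply integral_iUnion hAm hAd
    have hconst : IntegrableOn (fun _ : ℂ => B₀) (⋃ i, A i) volume := by
      apply (integrableOn_const_iff (C := B₀)).mpr
      right
      exact lt_of_le_of_lt (measure_mono (by rw [hAun]; exact diff_subset)) hVlt
    refine Integrable.mono' hconst ?_ ?_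
    · exact (hconjmeas n).mono_measure
        (Measure.restrict_mono (by rw [hAun]; exact diff_subset) le_rfl)
    · filter_upwards [ae_restrict_mem (MeasurableSet.iUnion hAm)] with w hw
      have : w ∈ Metric.ball (0:ℂ) 1 := by
        rw [hAun] at hw
        exact hw.1
      exact hintbd n w this
  have hannval : ∀ k n : ℕ, (∫ w in A k, f w * (starRingEnd ℂ) w ^ n) =
      c (k+1) * (if m (k+1) = n then ((2*Real.pi:ℝ):ℂ) *
        ((∫ r in b k..b (k+1), r^(n+1) : ℝ):ℂ) else 0) := by
    intro k n
    have hcong : EqOn (fun w => f w * (starRingEnd ℂ) w ^ n)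
        (fun w => c (k+1) * ((w / (‖w‖:ℂ))^(m (k+1)) * (starRingEnd ℂ) w ^ n)) (A k) := by
      intro w hw
      simp only
      rw [hfval w hw.1 (k+1) (Nat.le_add_left 1 k) (by simpa using hw.2.1) hw.2.2]
      ring
    rw [setIntegral_congr_fun (hAm k) hcong, MeasureTheory.integral_const_mul]
    congr 1
    exact annulus_integral (b k) (b (k+1)) (hbnn k) (hbmono.monotone (Nat.le_succ k)) (m (k+1)) n
  have hmj : StrictMono (fun k => m (k+1)) :=
    strictMono_nat_of_lt_succ (fun k => hmmono (k+1) (Nat.le_add_left 1 k))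
  have hImj : ∀ j : ℕ, 1 ≤ j → Iint (m j) =
      c j * (((2*Real.pi:ℝ):ℂ) * ((∫ r in b (j-1)..b j, r^(m j+1) : ℝ):ℂ)) := by
    intro j hj
    have hjj : (j-1)+1 = j := Nat.succ_pred_eq_of_pos hj
    rw [hIeq]
    rw [tsum_eq_single (j-1) ?_]
    · rw [hannval]
      simp [hjj]
    · intro k hk
      rw [hannval]
      rw [if_neg, mul_zero]
      intro heq
      apply hk
      have h2 : m (k+1) = m ((j-1)+1) := by rw [hjj]; exact heq
      exact hmj.injective h2
  have hamj : ∀ j : ℕ, 1 ≤ j → a (m j) =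
      2 * c j * ((∫ r in b (j-1)..b j, ((m j:ℝ)+1) * r^(m j+1) : ℝ):ℂ) := by
    intro j hj
    rw [hadef]
    simp only
    set X : ℝ := ∫ r in b (j-1)..b j, r^(m j+1) with hX
    rw [hImj j hj, intervalIntegral.integral_const_mul, ← hX]
    rw [Complex.ofReal_mul, Complex.ofReal_mul, Complex.ofReal_add, Complex.ofReal_natCast,
      Complex.ofReal_one]
    field_simp
    push_cast
    ring
  have hamj_abs : ∀ j : ℕ, 1 ≤ j → ‖c j‖ ≤ 2 * ‖a (m j)‖ := by
    intro j hj
    rw [hamj j hj, norm_mul, norm_mul, Complex.norm_real, Real.norm_eq_abs]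
    have hX : (1:ℝ)/4 ≤ ∫ r in b (j-1)..b j, ((m j:ℝ)+1) * r^(m j+1) := hmint j hj
    rw [abs_of_nonneg (by linarith)]
    have h2 : ‖(2:ℂ)‖ = 2 := by
      rw [show (2:ℂ) = ((2:ℝ):ℂ) by norm_num, Complex.norm_real]
      norm_num
    rw [h2]
    nlinarith [norm_nonneg (c j)]
  refine ⟨⟨B₀, hbound⟩, hmeasind, ?_⟩
  intro hsum
  have hsum' : Summable (fun n => ‖a n‖ ^ 2) := by
    apply hsum.congr
    intro n
    congr 2
    rw [hiter n, mul_comm, mul_div_assoc,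
      div_self (Nat.cast_ne_zero.mpr (Nat.factorial_ne_zero n) : (n.factorial : ℂ) ≠ 0), mul_one]
  have h2 : Summable (fun k => ‖a (m (k+1))‖ ^ 2) :=
    hsum'.comp_injective hmj.injective
  apply hcsum
  apply Summable.of_nonneg_of_le (fun k => sq_nonneg _) (fun k => ?_) (h2.mul_left 4)
  have h3 := hamj_abs (k+1) (Nat.le_add_left 1 k)
  nlinarith [norm_nonneg (a (m (k+1))),
    norm_nonneg (c (k+1))]
end

section
/- Let p > 1. Then lim_{r → 1⁻} (1 − r²)^{p−1} · (1/(2π)) ∫₀^{2π} 1/|1 − r e^{iθ}|^p dθ = Γ(p−1)/Γ(p/2)², where Γ is the Gamma function. -/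
set_option maxHeartbeats 1000000

open MeasureTheory Set Filter Real

lemma cont_aux (q c : ℝ) (hc : 0 < c) :
    Continuous (fun s : ℝ => (1 + c * s ^ 2) ^ (-(q/2))) := by
  apply Continuous.rpow_const (by continuity)
  intro x; left; positivity

lemma integrable_aux {q c : ℝ} (hq : 1 < q) (hc : 0 < c) :
    IntegrableOn (fun s : ℝ => (1 + c * s ^ 2) ^ (-(q/2))) (Ioi 0) := by
  have hmeas : AEStronglyMeasurable (fun s : ℝ => (1 + c * s ^ 2) ^ (-(q/2)))
      (volume.restrict (Ioi (0:ℝ))) := (cont_aux q c hc).aestronglyMeasurable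
  have h1 : IntegrableOn (fun s : ℝ => (1 + c * s ^ 2) ^ (-(q/2))) (Ioc 0 1) :=
    ((cont_aux q c hc).integrableOn_Icc (a := 0) (b := 1)).mono_set Ioc_subset_Icc_self
  have h2 : IntegrableOn (fun s : ℝ => (1 + c * s ^ 2) ^ (-(q/2))) (Ioi 1) := by
    have hbase : IntegrableOn (fun s : ℝ => c ^ (-(q/2)) * s ^ (-q)) (Ioi 1) :=
      (integrableOn_Ioi_rpow_of_lt (by linarith) one_pos).const_mul _
    refine hbase.mono' (hmeas.mono_set (Ioi_subset_Ioi one_pos.le)) ?_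
    filter_upwards [ae_restrict_mem measurableSet_Ioi] with s hs
    have hs1 : (1:ℝ) < s := hs
    have hs0 : (0:ℝ) < s := by linarith
    have hb0 : (0:ℝ) < c * s ^ 2 := by positivity
    rw [Real.norm_of_nonneg (Real.rpow_nonneg (by positivity) _)]
    have : (c * s ^ 2) ^ (-(q/2)) = c ^ (-(q/2)) * s ^ (-q) := by
      rw [Real.mul_rpow hc.le (by positivity), ← Real.rpow_natCast s 2,
        ← Real.rpow_mul hs0.le]
      norm_num; left; congr 1; ring
    rw [← this]
    exact Real.rpow_le_rpow_of_nonpos hb0 (by linarith) (by linarith)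
  have : Ioi (0:ℝ) = Ioc 0 1 ∪ Ioi 1 := (Ioc_union_Ioi_eq_Ioi one_pos.le).symm
  rw [this]
  exact h1.union h2

lemma realBeta {a b : ℝ} (ha : 0 < a) (hb : 0 < b) :
    ∫ t in (0:ℝ)..1, t ^ (a-1) * (1-t) ^ (b-1)
      = Real.Gamma a * Real.Gamma b / Real.Gamma (a+b) := by
  have key := Complex.Gamma_mul_Gamma_eq_betaIntegral (s := (a:ℂ)) (t := (b:ℂ))
    (by simpa using ha) (by simpa using hb)
  have hcast : Complex.betaIntegral (a:ℂ) (b:ℂ)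
      = ((∫ t in (0:ℝ)..1, t ^ (a-1) * (1-t) ^ (b-1) : ℝ) : ℂ) := by
    rw [Complex.betaIntegral, ← intervalIntegral.integral_ofReal]
    refine intervalIntegral.integral_congr (fun x hx => ?_)
    rw [uIcc_of_le zero_le_one] at hx
    rw [Complex.ofReal_mul, Complex.ofReal_cpow hx.1 (a-1),
      Complex.ofReal_cpow (by linarith [hx.2] : (0:ℝ) ≤ 1 - x) (b-1)]
    push_cast
    ring
  rw [hcast] at key
  have hG : Real.Gamma (a+b) ≠ 0 := (Real.Gamma_pos_of_pos (by linarith)).ne'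
  have : ((Real.Gamma a * Real.Gamma b : ℝ) : ℂ)
      = ((Real.Gamma (a+b) * ∫ t in (0:ℝ)..1, t ^ (a-1) * (1-t) ^ (b-1) : ℝ) : ℂ) := by
    push_cast
    rw [← Complex.Gamma_ofReal, ← Complex.Gamma_ofReal, ← Complex.Gamma_ofReal] at *
    push_cast at key ⊢
    rw [key]
  have hr := Complex.ofReal_injective this
  field_simp
  linarith [hr]

lemma intOne {q : ℝ} (hq : 1 < q) :
    ∫ s in Ioi (0:ℝ), (1 + s ^ 2) ^ (-(q/2))
      = √π * Real.Gamma ((q-1)/2) / (2 * Real.Gamma (q/2)) := by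
  set a : ℝ := (q-1)/2 with ha_def
  have ha : 0 < a := by unfold a; linarith
  set f : ℝ → ℝ := fun s => (1 + s^2)⁻¹ with hf_def
  set f' : ℝ → ℝ := fun s => -(2*s) / (1 + s^2)^2 with hf'_def
  have hX : ∀ s : ℝ, (0:ℝ) < 1 + s^2 := fun s => by positivity
  have hderiv : ∀ x ∈ Ioi (0:ℝ), HasDerivWithinAt f (f' x) (Ioi 0) x := by
    intro x _
    have h1 : HasDerivAt (fun s : ℝ => 1 + s^2) (2*x) x := by
      simpa using ((hasDerivAt_pow 2 x).const_add 1)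
    exact (h1.inv (hX x).ne').hasDerivWithinAt
  have hinj : InjOn f (Ioi 0) := by
    have : StrictAntiOn f (Ioi 0) := by
      intro x hx y hy hxy
      have : 1 + x^2 < 1 + y^2 := by nlinarith [mem_Ioi.mp hx]
      exact inv_strictAnti₀ (hX x) this
    exact this.injOn
  have himg : f '' Ioi 0 = Ioo 0 1 := by
    ext t
    constructor
    · rintro ⟨s, hs, rfl⟩
      have hs0 : (0:ℝ) < s := hs
      constructor
      · exact inv_pos.mpr (hX s)
      · rw [inv_lt_one_iff₀]
        right; nlinarith
    · rintro ⟨ht0, ht1⟩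
      refine ⟨Real.sqrt (1/t - 1), ?_, ?_⟩
      · have : 0 < 1/t - 1 := by
          rw [lt_sub_iff_add_lt, zero_add, lt_div_iff₀ ht0]
          linarith
        exact Real.sqrt_pos.mpr this
      · have h1 : (0:ℝ) ≤ 1/t - 1 := by
          rw [sub_nonneg, le_div_iff₀ ht0]; linarith
        show (1 + Real.sqrt (1/t-1) ^ 2)⁻¹ = t
        rw [Real.sq_sqrt h1]
        field_simp
        ring
  have key := integral_image_eq_integral_abs_deriv_smul measurableSet_Ioi hderiv hinj
    (fun t => t ^ (a-1) * (1-t) ^ (-(1/2) : ℝ))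
  rw [himg] at key
  have lhs_eq : ∫ t in Ioo (0:ℝ) 1, t ^ (a-1) * (1-t) ^ (-(1/2) : ℝ)
      = Real.Gamma a * √π / Real.Gamma (q/2) := by
    have hb := realBeta ha (by norm_num : (0:ℝ) < 1/2)
    rw [intervalIntegral.integral_of_le zero_le_one, integral_Ioc_eq_integral_Ioo] at hb
    have : (1:ℝ)/2 - 1 = -(1/2) := by norm_num
    rw [this] at hb
    rw [hb, Real.Gamma_one_half_eq]
    congr 2
    unfold a; ring
  have rhs_eq : ∫ s in Ioi (0:ℝ), |f' s| • ((f s) ^ (a-1) * (1 - f s) ^ (-(1/2) : ℝ))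
      = 2 * ∫ s in Ioi (0:ℝ), (1 + s ^ 2) ^ (-(q/2)) := by
    rw [← integral_const_mul]
    refine setIntegral_congr_fun measurableSet_Ioi (fun s hs => ?_)
    have hs0 : (0:ℝ) < s := hs
    have hX' := hX s
    have h1 : |f' s| = 2 * s / (1+s^2)^2 := by
      unfold f'
      rw [abs_div, abs_neg, abs_of_nonneg (by positivity : (0:ℝ) ≤ 2*s),
        abs_of_nonneg (by positivity : (0:ℝ) ≤ (1+s^2)^2)]
    have h2 : 1 - f s = s^2 / (1+s^2) := by
      unfold f; field_simp; ring
    have h3 : f s = (1+s^2) ^ (-1 : ℝ) := by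
      unfold f; rw [Real.rpow_neg_one]
    have hA : f s ^ (a-1) = (1+s^2) ^ (1-a) := by
      rw [h3, ← Real.rpow_mul hX'.le]
      congr 1; ring
    have hB : (1 - f s) ^ (-(1/2) : ℝ) = s ^ (-1:ℝ) * (1+s^2) ^ ((1:ℝ)/2) := by
      rw [h2, Real.rpow_neg (by positivity), ← Real.sqrt_eq_rpow,
        Real.sqrt_div (by positivity) _, Real.sqrt_sq hs0.le, inv_div, div_eq_mul_inv,
        mul_comm, Real.sqrt_eq_rpow, ← Real.rpow_neg_one]
    have h4 : ((1+s^2)^2 : ℝ) = (1+s^2) ^ ((2:ℕ):ℝ) := (Real.rpow_natCast _ 2).symm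
    rw [smul_eq_mul, h1, hA, hB, h4, div_eq_mul_inv, ← Real.rpow_neg hX'.le]
    have hs1 : s = s ^ (1:ℝ) := (Real.rpow_one s).symm
    calc 2 * s * (1+s^2) ^ (-((2:ℕ):ℝ)) * ((1+s^2) ^ (1-a) * (s ^ (-1:ℝ) * (1+s^2) ^ ((1:ℝ)/2)))
        = 2 * (s ^ (1:ℝ) * s ^ (-1:ℝ)) *
            ((1+s^2) ^ (-((2:ℕ):ℝ)) * (1+s^2) ^ (1-a) * (1+s^2) ^ ((1:ℝ)/2)) := by
          rw [← hs1]; ring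
      _ = 2 * (1+s^2) ^ (-(q/2)) := by
          rw [← Real.rpow_add hs0, ← Real.rpow_add hX', ← Real.rpow_add hX']
          norm_num
          rw [show -2 + (1-a) + 1/2 = -(q/2) by unfold a; ring]
  rw [rhs_eq, lhs_eq] at key
  have hG : Real.Gamma (q/2) ≠ 0 := (Real.Gamma_pos_of_pos (by linarith)).ne'
  field_simp at key ⊢
  linarith [key]

lemma abs_pt {p r θ : ℝ} (hr0 : 0 < r) (hr1 : r < 1) :
    1 / ‖1 - (r:ℂ) * Complex.exp ((θ:ℂ) * Complex.I)‖ ^ p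
      = ((1-r)^2 + 2*r*(1 - Real.cos θ)) ^ (-(p/2)) := by
  have hc := Real.cos_le_one θ
  have hpos : 0 < (1-r)^2 + 2*r*(1 - Real.cos θ) := by nlinarith
  have h1 : ‖1 - (r:ℂ) * Complex.exp ((θ:ℂ) * Complex.I)‖
      = Real.sqrt ((1-r)^2 + 2*r*(1 - Real.cos θ)) := by
    rw [Complex.norm_def]
    congr 1
    rw [Complex.normSq_apply]
    simp only [Complex.sub_re, Complex.sub_im, Complex.mul_re, Complex.mul_im,
      Complex.exp_ofReal_mul_I_re, Complex.exp_ofReal_mul_I_im, Complex.one_re,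
      Complex.one_im, Complex.ofReal_re, Complex.ofReal_im]
    nlinarith [Real.sin_sq_add_cos_sq θ]
  rw [h1, Real.sqrt_eq_rpow, ← Real.rpow_mul hpos.le, one_div, ← Real.rpow_neg hpos.le]
  congr 1; ring

lemma sinc_lim : Tendsto (fun y : ℝ => Real.sin y / y) (nhdsWithin 0 {0}ᶜ) (nhds 1) := by
  have h := Real.hasDerivAt_sin 0
  rw [hasDerivAt_iff_tendsto_slope] at h
  have hs : slope Real.sin 0 = fun y => Real.sin y / y := by
    funext y
    rw [slope_def_field]
    simp [div_eq_mul_inv]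
  rw [hs, Real.cos_zero] at h
  exact h

lemma gamma_arith {p : ℝ} (hp : 1 < p) :
    (2:ℝ)^(p-1)/π * (√π * Real.Gamma ((p-1)/2) / (2 * Real.Gamma (p/2)))
      = Real.Gamma (p-1) / (Real.Gamma (p/2))^2 := by
  have hπ : 0 < π := Real.pi_pos
  have hdup := Real.Gamma_mul_Gamma_add_half ((p-1)/2)
  rw [show (p-1)/2 + 1/2 = p/2 by ring, show 2*((p-1)/2) = p-1 by ring,
    show 1-(p-1) = 2-p by ring] at hdup
  have hG : (0:ℝ) < Real.Gamma (p/2) := Real.Gamma_pos_of_pos (by linarith)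
  have h2 : (2:ℝ)^(p-1) * 2^(2-p) = 2 := by
    rw [← Real.rpow_add two_pos]; norm_num
  have hππ : √π * √π = π := Real.mul_self_sqrt hπ.le
  have hΓ1 : Real.Gamma ((p-1)/2) = Real.Gamma (p-1) * 2^(2-p) * √π / Real.Gamma (p/2) := by
    field_simp
    linarith [hdup]
  have h2' : (2:ℝ)^(-1+p) * 2^(2-p) = 2 := by
    rw [← Real.rpow_add two_pos]; norm_num
  rw [hΓ1]
  field_simp
  ring_nf
  rw [Real.sq_sqrt hπ.le]
  linear_combination Real.Gamma (-1+p) * π * h2'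

lemma main_eq {p r : ℝ} (hp : 1 < p) (hr : r ∈ Ioo (1/2:ℝ) 1) :
    (1+r)^(p-1)/π * (∫ s in Ioi (0:ℝ), Set.indicator (Ioo 0 (π/(1-r)))
        (fun s => (1 + 2*r*(1 - Real.cos ((1-r)*s)) / (1-r)^2) ^ (-(p/2))) s)
      = (1 - r^2) ^ (p-1) * ((1/(2*π)) * ∫ θ in (0:ℝ)..(2*π),
          1 / ‖1 - (r:ℂ) * Complex.exp ((θ:ℂ) * Complex.I)‖ ^ p) := by
  have hπ : (0:ℝ) < π := Real.pi_pos
  have hr0 : (0:ℝ) < r := by linarith [hr.1]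
  have hr1 : r < 1 := hr.2
  have hε : (0:ℝ) < 1 - r := by linarith
  set f : ℝ → ℝ := fun θ => ((1-r)^2 + 2*r*(1 - Real.cos θ)) ^ (-(p/2)) with hf
  have hfpos : ∀ θ : ℝ, 0 < (1-r)^2 + 2*r*(1 - Real.cos θ) := fun θ => by
    nlinarith [Real.cos_le_one θ]
  have hfc : Continuous f :=
    Continuous.rpow_const (by continuity) (fun θ => Or.inl (hfpos θ).ne')
  have e1 : (∫ θ in (0:ℝ)..(2*π),
        1 / ‖1 - (r:ℂ) * Complex.exp ((θ:ℂ) * Complex.I)‖ ^ p)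
      = ∫ θ in (0:ℝ)..(2*π), f θ :=
    intervalIntegral.integral_congr (fun θ _ => abs_pt hr0 hr1)
  have e2 : (∫ θ in (0:ℝ)..(2*π), f θ) = 2 * ∫ θ in (0:ℝ)..π, f θ := by
    have i1 : IntervalIntegrable f volume 0 π := hfc.intervalIntegrable _ _
    have i2 : IntervalIntegrable f volume π (2*π) := hfc.intervalIntegrable _ _
    rw [← intervalIntegral.integral_add_adjacent_intervals i1 i2]
    have e3 : (∫ θ in π..(2*π), f θ) = ∫ θ in (0:ℝ)..π, f θ := by
      have h := intervalIntegral.integral_comp_sub_left (a := 0) (b := π) f (2*π)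
      rw [show 2*π - π = π by ring, show 2*π - 0 = 2*π by ring] at h
      rw [← h]
      refine intervalIntegral.integral_congr (fun θ _ => ?_)
      simp only [hf]
      rw [Real.cos_two_pi_sub]
    rw [e3]; ring
  have e4 : (∫ θ in (0:ℝ)..π, f θ) = (1-r) * ∫ s in (0:ℝ)..(π/(1-r)), f ((1-r)*s) := by
    have h := intervalIntegral.smul_integral_comp_mul_left (a := 0) (b := π/(1-r)) f (1-r)
    rw [show (1-r)*(π/(1-r)) = π by field_simp, mul_zero] at h
    rw [← h, smul_eq_mul]
  have hbase_pos : ∀ s : ℝ, 0 < 1 + 2*r*(1 - Real.cos ((1-r)*s)) / (1-r)^2 := by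
    intro s
    have hX : 0 ≤ 2*r*(1 - Real.cos ((1-r)*s)) := by nlinarith [Real.cos_le_one ((1-r)*s)]
    have := div_nonneg hX (sq_nonneg (1-r))
    linarith
  have e5 : ∀ s : ℝ, f ((1-r)*s)
      = (1-r)^(-p) * (1 + 2*r*(1 - Real.cos ((1-r)*s)) / (1-r)^2) ^ (-(p/2)) := by
    intro s
    simp only [hf]
    have key : (1-r)^2 + 2*r*(1 - Real.cos ((1-r)*s))
        = (1-r)^2 * (1 + 2*r*(1 - Real.cos ((1-r)*s))/(1-r)^2) := by
      field_simp
    rw [key, Real.mul_rpow (by positivity) (hbase_pos s).le]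
    congr 1
    rw [← Real.rpow_natCast (1-r) 2, ← Real.rpow_mul hε.le]
    norm_num
    congr 1; ring
  have e6 : (∫ s in (0:ℝ)..(π/(1-r)), f ((1-r)*s))
      = (1-r)^(-p) * ∫ s in (0:ℝ)..(π/(1-r)),
          (1 + 2*r*(1 - Real.cos ((1-r)*s))/(1-r)^2) ^ (-(p/2)) := by
    rw [← intervalIntegral.integral_const_mul]
    exact intervalIntegral.integral_congr (fun s _ => e5 s)
  have e7 : (∫ s in (0:ℝ)..(π/(1-r)), (1 + 2*r*(1 - Real.cos ((1-r)*s))/(1-r)^2) ^ (-(p/2)))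
      = ∫ s in Ioi (0:ℝ), Set.indicator (Ioo 0 (π/(1-r)))
          (fun s => (1 + 2*r*(1 - Real.cos ((1-r)*s)) / (1-r)^2) ^ (-(p/2))) s := by
    rw [intervalIntegral.integral_of_le (by positivity), integral_Ioc_eq_integral_Ioo,
      setIntegral_indicator measurableSet_Ioo,
      inter_eq_right.mpr Ioo_subset_Ioi_self]
  rw [e1, e2, e4, e6, e7]
  set G := ∫ s in Ioi (0:ℝ), Set.indicator (Ioo 0 (π/(1-r)))
      (fun s => (1 + 2*r*(1 - Real.cos ((1-r)*s)) / (1-r)^2) ^ (-(p/2))) s with hG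
  have e8 : (1-r^2)^(p-1) = (1+r)^(p-1) * (1-r)^(p-1) := by
    rw [show (1:ℝ)-r^2 = (1+r)*(1-r) by ring, Real.mul_rpow (by linarith) hε.le]
  have e9 : (1-r)^(p-1) * (1-r)^(-p) = (1-r)⁻¹ := by
    rw [← Real.rpow_add hε, show p-1 + -p = -1 by ring, Real.rpow_neg_one]
  have e10 : (1-r)^(p-1) * (1/(2*π) * (2*((1-r) * ((1-r)^(-p) * G)))) = G/π := by
    rw [show (1-r)^(p-1) * (1/(2*π) * (2*((1-r) * ((1-r)^(-p) * G))))
        = ((1-r)^(p-1) * (1-r)^(-p)) * (1-r) * G / π by ring, e9]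
    field_simp
  rw [e8, mul_assoc, e10]
  ring

theorem stmt13 (p : ℝ) (hp : 1 < p) :
    Tendsto
      (fun r : ℝ => (1 - r ^ 2) ^ (p - 1) *
        ((1 / (2 * Real.pi)) *
          ∫ θ in (0:ℝ)..(2 * Real.pi),
            1 / ‖1 - (r : ℂ) * Complex.exp ((θ : ℂ) * Complex.I)‖ ^ p))
      (nhdsWithin 1 (Iio (1:ℝ)))
      (nhds (Real.Gamma (p - 1) / (Real.Gamma (p / 2)) ^ 2)) := by
  have hπ : (0:ℝ) < π := Real.pi_pos
  have hev : Ioo (1/2 : ℝ) 1 ∈ nhdsWithin (1:ℝ) (Iio 1) :=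
    Ioo_mem_nhdsLT_of_mem ⟨by norm_num, le_refl 1⟩
  set H : ℝ → ℝ → ℝ := fun r s => Set.indicator (Ioo 0 (π/(1-r)))
      (fun s => (1 + 2*r*(1 - Real.cos ((1-r)*s)) / (1-r)^2) ^ (-(p/2))) s with hH_def
  have hbase_pos : ∀ r : ℝ, r ∈ Ioo (1/2:ℝ) 1 → ∀ s : ℝ,
      0 < 1 + 2*r*(1 - Real.cos ((1-r)*s)) / (1-r)^2 := by
    intro r hr s
    have hr0 : (0:ℝ) < r := by linarith [hr.1]
    have hX : 0 ≤ 2*r*(1 - Real.cos ((1-r)*s)) := by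
      nlinarith [Real.cos_le_one ((1-r)*s)]
    have := div_nonneg hX (sq_nonneg (1-r))
    linarith
  have hH_meas : ∀ r ∈ Ioo (1/2:ℝ) 1,
      AEStronglyMeasurable (H r) (volume.restrict (Ioi 0)) := by
    intro r hr
    have hcont : Continuous
        (fun s : ℝ => (1 + 2*r*(1 - Real.cos ((1-r)*s)) / (1-r)^2) ^ (-(p/2))) :=
      Continuous.rpow_const (by continuity) (fun s => Or.inl (hbase_pos r hr s).ne')
    exact (hcont.measurable.indicator measurableSet_Ioo).aestronglyMeasurable
  have h_bound : ∀ r ∈ Ioo (1/2:ℝ) 1, ∀ s : ℝ,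
      ‖H r s‖ ≤ (1 + (2/π^2) * s^2) ^ (-(p/2)) := by
    intro r hr s
    have hr2 : (1:ℝ)/2 < r := hr.1
    have hε : (0:ℝ) < 1 - r := by linarith [hr.2]
    by_cases hs : s ∈ Ioo (0:ℝ) (π/(1-r))
    · simp only [hH_def]
      rw [Set.indicator_of_mem hs,
        Real.norm_of_nonneg (Real.rpow_nonneg (hbase_pos r hr s).le _)]
      apply Real.rpow_le_rpow_of_nonpos (by positivity) _ (by linarith)
      have hs0 : (0:ℝ) < s := hs.1
      have hsπ : (1-r)*s < π := by
        have := hs.2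
        rw [lt_div_iff₀ hε] at this
        linarith [this]
      set y := (1-r)*s/2 with hy_def
      have hy0 : 0 ≤ y := by positivity
      have hy2 : y ≤ π/2 := by rw [hy_def]; linarith
      have hsin := Real.mul_le_sin hy0 hy2
      have hsin_sq : (2/π * y)^2 ≤ Real.sin y ^ 2 :=
        pow_le_pow_left₀ (by positivity) hsin 2
      have hcos : Real.cos ((1-r)*s) = 1 - 2 * Real.sin y ^ 2 := by
        have h := Real.cos_two_mul y
        rw [show 2*y = (1-r)*s by rw [hy_def]; ring] at h
        nlinarith [Real.sin_sq_add_cos_sq y]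
      rw [hcos]
      have h2 : 2/π^2 * s^2 ≤ 2*r*(1-(1-2*Real.sin y^2))/(1-r)^2 := by
        rw [le_div_iff₀ (by positivity)]
        have hsin' : (1-r)*s/π ≤ Real.sin y := by
          have hee : 2/π*y = (1-r)*s/π := by rw [hy_def]; ring
          rw [← hee]; exact hsin
        have hsq : ((1-r)*s/π)^2 ≤ Real.sin y^2 :=
          pow_le_pow_left₀ (by positivity) hsin' 2
        have h4 : 4*r*(((1-r)*s/π)^2) ≤ 4*r*Real.sin y^2 :=
          mul_le_mul_of_nonneg_left hsq (by linarith : (0:ℝ) ≤ 4*r)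
        have h5 : (0:ℝ) ≤ (4*r-2) * (((1-r)*s/π)^2) :=
          mul_nonneg (by linarith) (sq_nonneg _)
        have hexp : ((1-r)*s/π)^2 = (1-r)^2*s^2/π^2 := by field_simp
        rw [hexp] at h4 h5
        have hgoal : 2/π^2 * s^2 * (1-r)^2 = 2*((1-r)^2*s^2/π^2) := by field_simp
        rw [hgoal]
        linarith [h4, h5]
      linarith [h2]
    · simp only [hH_def]
      rw [Set.indicator_of_notMem hs, norm_zero]
      positivity
  have h_lim : ∀ᵐ s ∂(volume.restrict (Ioi (0:ℝ))),
      Tendsto (fun r => H r s) (nhdsWithin 1 (Iio 1)) (nhds ((1 + s^2) ^ (-(p/2)))) := by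
    filter_upwards [ae_restrict_mem measurableSet_Ioi] with s hs
    have hs0 : (0:ℝ) < s := hs
    have hy : Tendsto (fun r : ℝ => (1-r)*s/2) (nhdsWithin 1 (Iio 1))
        (nhdsWithin 0 {0}ᶜ) := by
      rw [tendsto_nhdsWithin_iff]
      constructor
      · have hccc : Continuous (fun r : ℝ => (1-r)*s/2) := by continuity
        have h := (hccc.tendsto 1).mono_left (nhdsWithin_le_nhds (s := Iio (1:ℝ)))
        simpa using h
      · filter_upwards [self_mem_nhdsWithin] with r hr
        have hr1 : r < 1 := hr
        have : (0:ℝ) < (1-r)*s/2 := by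
          have : (0:ℝ) < 1 - r := by linarith
          positivity
        simp only [mem_compl_iff, mem_singleton_iff]
        exact this.ne'
    have t1 : Tendsto (fun r : ℝ => r) (nhdsWithin 1 (Iio 1)) (nhds 1) :=
      (continuous_id.tendsto 1).mono_left nhdsWithin_le_nhds
    have t2 : Tendsto (fun r : ℝ => Real.sin ((1-r)*s/2) / ((1-r)*s/2))
        (nhdsWithin 1 (Iio 1)) (nhds 1) := sinc_lim.comp hy
    have hq : Tendsto (fun r : ℝ => 2*r*(1 - Real.cos ((1-r)*s)) / (1-r)^2)
        (nhdsWithin 1 (Iio 1)) (nhds (s^2)) := by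
      have tprod : Tendsto
          (fun r : ℝ => r * s^2 * (Real.sin ((1-r)*s/2) / ((1-r)*s/2))^2)
          (nhdsWithin 1 (Iio 1)) (nhds (1 * s^2 * 1^2)) :=
        (t1.mul tendsto_const_nhds).mul (t2.pow 2)
      rw [show (1:ℝ) * s^2 * 1^2 = s^2 by ring] at tprod
      refine Tendsto.congr' ?_ tprod
      filter_upwards [self_mem_nhdsWithin] with r hr
      have hr1 : r < 1 := hr
      have hε : (0:ℝ) < 1 - r := by linarith
      have hyne : (1-r)*s/2 ≠ 0 := by positivity
      have hcos : Real.cos ((1-r)*s) = 1 - 2 * Real.sin ((1-r)*s/2) ^ 2 := by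
        have h := Real.cos_two_mul ((1-r)*s/2)
        rw [show 2*((1-r)*s/2) = (1-r)*s by ring] at h
        nlinarith [Real.sin_sq_add_cos_sq ((1-r)*s/2)]
      rw [hcos]
      field_simp
      ring
    have hbase_t : Tendsto (fun r : ℝ => 1 + 2*r*(1 - Real.cos ((1-r)*s)) / (1-r)^2)
        (nhdsWithin 1 (Iio 1)) (nhds (1 + s^2)) := tendsto_const_nhds.add hq
    have hrp : Tendsto (fun r : ℝ =>
          (1 + 2*r*(1 - Real.cos ((1-r)*s)) / (1-r)^2) ^ (-(p/2)))
        (nhdsWithin 1 (Iio 1)) (nhds ((1 + s^2) ^ (-(p/2)))) :=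
      ((Real.continuousAt_rpow_const (1+s^2) (-(p/2))
        (Or.inl (by positivity : (1:ℝ)+s^2 ≠ 0))).tendsto).comp hbase_t
    have hevs : Ioo (max (1/2 : ℝ) (1 - π/(2*s))) 1 ∈ nhdsWithin (1:ℝ) (Iio 1) := by
      apply Ioo_mem_nhdsLT_of_mem
      constructor
      · apply max_lt (by norm_num)
        have : (0:ℝ) < π/(2*s) := by positivity
        linarith
      · exact le_refl 1
    refine Tendsto.congr' ?_ hrp
    filter_upwards [hevs] with r hr
    have hr1 : r < 1 := hr.2
    have hε : (0:ℝ) < 1 - r := by linarith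
    have hrπ : 1 - r < π/s := by
      have h1 : 1 - π/(2*s) < r := lt_of_le_of_lt (le_max_right _ _) hr.1
      have h2 : π/(2*s) < π/s := by
        rw [div_lt_div_iff₀ (by positivity) hs0]
        nlinarith
      linarith
    have hmem : s ∈ Ioo (0:ℝ) (π/(1-r)) := by
      refine ⟨hs0, ?_⟩
      rw [lt_div_iff₀ hε]
      calc s * (1-r) < s * (π/s) := by
            apply mul_lt_mul_of_pos_left hrπ hs0
        _ = π := by field_simp
    simp only [hH_def]
    rw [Set.indicator_of_mem hmem]
  have hbnd_int : Integrable (fun s : ℝ => (1 + (2/π^2) * s^2) ^ (-(p/2)))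
      (volume.restrict (Ioi 0)) := integrable_aux hp (by positivity)
  have hDCT := MeasureTheory.tendsto_integral_filter_of_dominated_convergence
      (μ := volume.restrict (Ioi (0:ℝ))) (F := H)
      (f := fun s : ℝ => (1+s^2)^(-(p/2)))
      (l := nhdsWithin (1:ℝ) (Iio 1))
      (bound := fun s : ℝ => (1 + (2/π^2)*s^2)^(-(p/2)))
      (eventually_of_mem hev hH_meas)
      (eventually_of_mem hev (fun r hr => ae_of_all _ (h_bound r hr)))
      hbnd_int h_lim
  have tpre : Tendsto (fun r : ℝ => (1+r)^(p-1)/π) (nhdsWithin 1 (Iio 1))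
      (nhds ((2:ℝ)^(p-1)/π)) := by
    have c1 : ContinuousAt (fun x : ℝ => x ^ (p-1)) 2 :=
      Real.continuousAt_rpow_const 2 _ (Or.inl two_ne_zero)
    have h2 : Tendsto (fun r : ℝ => 1+r) (nhdsWithin 1 (Iio 1)) (nhds 2) := by
      have hc : Continuous (fun r : ℝ => 1+r) := by continuity
      have h := (hc.tendsto 1).mono_left (nhdsWithin_le_nhds (s := Iio (1:ℝ)))
      norm_num at h
      exact h
    exact (c1.tendsto.comp h2).div_const π
  have hmain := tpre.mul hDCT
  rw [intOne hp, gamma_arith hp] at hmain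
  refine Tendsto.congr' ?_ hmain
  filter_upwards [hev] with r hr
  exact main_eq hp hr
end

section
/- Suppose s < 1, m + s > 1, k > −1, and additionally 2 + k > s + m and 2 + k > s. Then for every x with 0 ≤ x < 1, ∫₀¹ (1 − y)^{−s} y^k / (1 − x y)^m dy ≤ (Γ(s+m−1) Γ(1−s)/Γ(m)) · (1 − x)^{1−s−m}, where Γ is the Gamma function. -/
open MeasureTheory Set


lemma betaVal (a b : ℝ) (ha : 0 < a) (hb : 0 < b) :
    ∫ t in (0:ℝ)..1, t ^ (a-1) * (1-t) ^ (b-1) =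
      Real.Gamma a * Real.Gamma b / Real.Gamma (a+b) := by
  have h := Complex.Gamma_mul_Gamma_eq_betaIntegral (s := (a:ℂ)) (t := (b:ℂ))
    (by simpa using ha) (by simpa using hb)
  have hcoe : Complex.betaIntegral a b =
      ((∫ t in (0:ℝ)..1, t ^ (a-1) * (1-t) ^ (b-1) : ℝ) : ℂ) := by
    rw [Complex.betaIntegral, ← intervalIntegral.integral_ofReal]
    refine intervalIntegral.integral_congr (fun t ht => ?_)
    rw [uIcc_of_le (by norm_num : (0:ℝ) ≤ 1)] at ht
    push_cast
    rw [Complex.ofReal_cpow ht.1 (a-1), Complex.ofReal_cpow (by linarith [ht.2] : (0:ℝ) ≤ 1 - t) (b-1)]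
    push_cast
    ring
  rw [hcoe, Complex.Gamma_ofReal, Complex.Gamma_ofReal, ← Complex.ofReal_add,
    Complex.Gamma_ofReal] at h
  have h' : Real.Gamma a * Real.Gamma b = Real.Gamma (a+b) * ∫ t in (0:ℝ)..1, t ^ (a-1) * (1-t) ^ (b-1) := by
    exact_mod_cast h
  have hG : Real.Gamma (a+b) ≠ 0 := (Real.Gamma_pos_of_pos (by linarith)).ne'
  rw [eq_div_iff hG, h']; ring

lemma betaInt (a b : ℝ) (ha : 0 < a) (hb : 0 < b) :
    IntegrableOn (fun t : ℝ => t ^ (a-1) * (1-t) ^ (b-1)) (Ioo 0 1) := by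
  have h := (Complex.betaIntegral_convergent (u := (a:ℂ)) (v := (b:ℂ))
    (by simpa using ha) (by simpa using hb)).1
  have : IntegrableOn (fun x : ℝ => ((x:ℂ) ^ ((a:ℂ) - 1) * (1 - (x:ℂ)) ^ ((b:ℂ) - 1)).re) (Ioo 0 1) := IntegrableOn.mono_set h.re Ioo_subset_Ioc_self
  refine (IntegrableOn.congr_fun this ?_ measurableSet_Ioo)
  intro t ht
  simp only []
  rw [show ((1:ℂ) - (t:ℂ)) = ((1 - t : ℝ) : ℂ) by push_cast; ring,
    show ((a:ℂ) - 1) = ((a-1:ℝ):ℂ) by push_cast; ring,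
    show ((b:ℂ) - 1) = ((b-1:ℝ):ℂ) by push_cast; ring,
    ← Complex.ofReal_cpow ht.1.le, ← Complex.ofReal_cpow (by linarith [ht.2] : (0:ℝ) ≤ 1 - t),
    ← Complex.ofReal_mul, Complex.ofReal_re]

lemma ptwise (s m k : ℝ) (hs : s < 1) (x : ℝ) (hx0 : 0 ≤ x) (hx1 : x < 1)
    (u : ℝ) (hu : u ∈ Ioo (0:ℝ) 1) :
    |(x-1)/(1-x*u)^2| * ((1 - (1-u)/(1-x*u)) ^ (-s) * ((1-u)/(1-x*u)) ^ k / (1 - x * ((1-u)/(1-x*u))) ^ m)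
      = (1-x) ^ (1-s-m) * (u ^ (-s) * (1-u) ^ k * (1-x*u) ^ (s+m-k-2)) := by
  obtain ⟨hu0, hu1⟩ := hu
  have hA : 0 < 1 - x := by linarith
  have h1u : 0 < 1 - u := by linarith
  have hD : 0 < 1 - x * u := by nlinarith
  have e1 : 1 - (1-u)/(1-x*u) = u*(1-x)/(1-x*u) := by
    rw [eq_div_iff hD.ne', sub_mul, div_mul_cancel₀ _ hD.ne']; ring
  have e2 : 1 - x*((1-u)/(1-x*u)) = (1-x)/(1-x*u) := by field_simp; ring
  have e3 : |(x-1)/(1-x*u)^2| = (1-x)/(1-x*u)^2 := by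
    rw [abs_div, abs_of_neg (by linarith : x - 1 < 0), abs_of_pos (by positivity)]; ring
  rw [e1, e2, e3, Real.div_rpow (by positivity) hD.le, Real.div_rpow h1u.le hD.le,
    Real.div_rpow hA.le hD.le, Real.mul_rpow hu0.le hA.le]
  field_simp
  have key : ∀ p q : ℝ, 0 < p → 0 < q → Real.log p = Real.log q → p = q := fun p q hp hq h => by
    rw [← Real.exp_log hp, ← Real.exp_log hq, h]
  apply key _ _ (by positivity) (by positivity)
  have n1 : u ^ (-s) ≠ 0 := by positivity
  have n2 : (1-x) ^ (-s) ≠ 0 := by positivity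
  have n3 : (1-u) ^ k ≠ 0 := by positivity
  have n4 : (1-x*u) ^ m ≠ 0 := by positivity
  have n5 : (1-x) ^ (1-s-m) ≠ 0 := by positivity
  have n6 : (1-x*u) ^ (s+m-k-2) ≠ 0 := by positivity
  have n7 : (1-x*u) ^ (2:ℕ) ≠ 0 := by positivity
  have n8 : (1-x*u) ^ (-s) ≠ 0 := by positivity
  have n9 : (1-x*u) ^ k ≠ 0 := by positivity
  have n10 : (1-x) ^ m ≠ 0 := by positivity
  rw [Real.log_mul (by positivity) n4, Real.log_mul hA.ne' n2,
    Real.log_mul (by positivity) n6, Real.log_mul (by positivity) n5,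
    Real.log_mul (by positivity) n10, Real.log_mul (by positivity) n9, Real.log_mul n7 n8]
  simp only [Real.log_rpow hA, Real.log_rpow hD, Real.log_pow]
  push_cast
  ring

theorem stmt14 (s m k : ℝ) (hs : s < 1) (hms : 1 < m + s) (hk : -1 < k)
    (h1 : s + m < 2 + k) (h2 : s < 2 + k) (x : ℝ) (hx0 : 0 ≤ x) (hx1 : x < 1) :
    ∫ y in (0:ℝ)..1, (1 - y) ^ (-s) * y ^ k / (1 - x * y) ^ m ≤
      (Real.Gamma (s + m - 1) * Real.Gamma (1 - s) / Real.Gamma m) *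
        (1 - x) ^ (1 - s - m) := by
  have hA : 0 < 1 - x := by linarith
  have hIoo : ∀ u ∈ Ioo (0:ℝ) 1, 0 < 1 - x * u := by
    intro u hu; nlinarith [hu.1, hu.2]
  have hmem : ∀ u ∈ Ioo (0:ℝ) 1, (1-u)/(1-x*u) ∈ Ioo (0:ℝ) 1 := by
    intro u hu
    have hD := hIoo u hu
    refine ⟨div_pos (by linarith [hu.2]) hD, ?_⟩
    rw [div_lt_one hD]; nlinarith [hu.1]
  have hinv : ∀ u ∈ Ioo (0:ℝ) 1,
      (1 - (1-u)/(1-x*u))/(1 - x*((1-u)/(1-x*u))) = u := by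
    intro u hu
    have hD := hIoo u hu
    rw [show 1 - (1-u)/(1-x*u) = u*(1-x)/(1-x*u) by
        rw [eq_div_iff hD.ne', sub_mul, div_mul_cancel₀ _ hD.ne']; ring,
      show 1 - x*((1-u)/(1-x*u)) = (1-x)/(1-x*u) by field_simp; ring]
    rw [div_div_div_cancel_right₀ hD.ne', mul_div_assoc, div_self hA.ne', mul_one]
  have himg : (fun u : ℝ => (1-u)/(1-x*u)) '' Ioo 0 1 = Ioo 0 1 := by
    apply Subset.antisymm
    · rintro y ⟨u, hu, rfl⟩; exact hmem u hu
    · intro y hy; exact ⟨(1-y)/(1-x*y), hmem y hy, hinv y hy⟩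
  have hinj : InjOn (fun u : ℝ => (1-u)/(1-x*u)) (Ioo 0 1) := by
    intro a ha b hb hab
    have h3 : (1 - (1-a)/(1-x*a))/(1 - x*((1-a)/(1-x*a)))
        = (1 - (1-b)/(1-x*b))/(1 - x*((1-b)/(1-x*b))) := by
      simp only at hab; rw [hab]
    rwa [hinv a ha, hinv b hb] at h3
  have hderiv : ∀ u ∈ Ioo (0:ℝ) 1, HasDerivWithinAt (fun u : ℝ => (1-u)/(1-x*u))
      ((x-1)/(1-x*u)^2) (Ioo 0 1) u := by
    intro u hu
    have hD := hIoo u hu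
    have d1 : HasDerivAt (fun u : ℝ => 1 - u) (-1) u := by
      simpa using (hasDerivAt_id u).const_sub 1
    have d2 : HasDerivAt (fun u : ℝ => 1 - x*u) (-x) u := by
      simpa using ((hasDerivAt_id u).const_mul x).const_sub 1
    have := (d1.div d2 hD.ne')
    apply HasDerivAt.hasDerivWithinAt
    convert this using 1
    · rfl
    · rfl
    · ring
  have hb2 := betaInt (1-s) (s+m-1) (by linarith) (by linarith)
  rw [show (1-s)-1 = -s by ring, show (s+m-1)-1 = s+m-2 by ring] at hb2
  have hInt2 : IntegrableOn
      (fun u : ℝ => (1-x)^(1-s-m) * (u^(-s)*(1-u)^(s+m-2))) (Ioo 0 1) :=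
    hb2.const_mul _
  have hbd : ∀ u ∈ Ioo (0:ℝ) 1,
      (1-x)^(1-s-m) * (u^(-s)*(1-u)^k*(1-x*u)^(s+m-k-2))
        ≤ (1-x)^(1-s-m) * (u^(-s)*(1-u)^(s+m-2)) := by
    intro u hu
    obtain ⟨hu0, hu1⟩ := hu
    have h1u : 0 < 1 - u := by linarith
    have hD : 0 < 1 - x*u := by nlinarith
    have key : (1-x*u)^(s+m-k-2) ≤ (1-u)^(s+m-k-2) :=
      Real.rpow_le_rpow_of_nonpos h1u (by nlinarith) (by linarith)
    have h3 : u^(-s)*(1-u)^k*(1-x*u)^(s+m-k-2) ≤ u^(-s)*(1-u)^(s+m-2) := by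
      calc u^(-s)*(1-u)^k*(1-x*u)^(s+m-k-2) ≤ u^(-s)*(1-u)^k*(1-u)^(s+m-k-2) := by
            exact mul_le_mul_of_nonneg_left key (by positivity)
        _ = u^(-s)*((1-u)^(k+(s+m-k-2))) := by
            rw [mul_assoc, ← Real.rpow_add h1u]
        _ = u^(-s)*(1-u)^(s+m-2) := by rw [show k+(s+m-k-2) = s+m-2 by ring]
    exact mul_le_mul_of_nonneg_left h3 (by positivity)
  have hcont : ContinuousOn
      (fun u : ℝ => (1-x)^(1-s-m) * (u^(-s)*(1-u)^k*(1-x*u)^(s+m-k-2))) (Ioo 0 1) := by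
    apply continuousOn_const.mul
    apply ContinuousOn.mul
    apply ContinuousOn.mul
    · exact continuousOn_id.rpow_const (fun u hu => Or.inl (ne_of_gt hu.1))
    · exact ((continuousOn_const.sub continuousOn_id).rpow_const
        (fun u hu => Or.inl (by have := hu.2; simp; intro h; linarith)))
    · exact ((continuousOn_const.sub (continuousOn_const.mul continuousOn_id)).rpow_const
        (fun u hu => Or.inl (ne_of_gt (hIoo u hu))))
  have hInt1 : IntegrableOn
      (fun u : ℝ => (1-x)^(1-s-m) * (u^(-s)*(1-u)^k*(1-x*u)^(s+m-k-2))) (Ioo 0 1) := by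
    apply Integrable.mono' hInt2 (hcont.aestronglyMeasurable measurableSet_Ioo)
    filter_upwards [ae_restrict_mem measurableSet_Ioo] with u hu
    rw [Real.norm_eq_abs, abs_of_nonneg]
    · exact hbd u hu
    · have hD := hIoo u hu
      have h1u : 0 < 1 - u := by linarith [hu.2]
      have hu0 := hu.1
      positivity
  calc ∫ y in (0:ℝ)..1, (1 - y) ^ (-s) * y ^ k / (1 - x * y) ^ m
      = ∫ y in Ioo (0:ℝ) 1, (1 - y) ^ (-s) * y ^ k / (1 - x * y) ^ m := by
        rw [intervalIntegral.integral_of_le (by norm_num : (0:ℝ) ≤ 1),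
          integral_Ioc_eq_integral_Ioo]
    _ = ∫ u in Ioo (0:ℝ) 1, |(x-1)/(1-x*u)^2| •
          ((1 - (1-u)/(1-x*u)) ^ (-s) * ((1-u)/(1-x*u)) ^ k / (1 - x * ((1-u)/(1-x*u))) ^ m) := by
        conv_lhs => rw [← himg]
        exact integral_image_eq_integral_abs_deriv_smul measurableSet_Ioo hderiv hinj _
    _ = ∫ u in Ioo (0:ℝ) 1, (1-x)^(1-s-m) * (u^(-s)*(1-u)^k*(1-x*u)^(s+m-k-2)) := by
        refine setIntegral_congr_fun measurableSet_Ioo (fun u hu => ?_)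
        rw [smul_eq_mul]
        exact ptwise s m k hs x hx0 hx1 u hu
    _ ≤ ∫ u in Ioo (0:ℝ) 1, (1-x)^(1-s-m) * (u^(-s)*(1-u)^(s+m-2)) :=
        setIntegral_mono_on hInt1 hInt2 measurableSet_Ioo hbd
    _ = (1-x)^(1-s-m) * ∫ u in Ioo (0:ℝ) 1, u^(-s)*(1-u)^(s+m-2) := by
        rw [MeasureTheory.integral_const_mul]
    _ = (Real.Gamma (s + m - 1) * Real.Gamma (1 - s) / Real.Gamma m) * (1 - x) ^ (1 - s - m) := by
        have hv := betaVal (1-s) (s+m-1) (by linarith) (by linarith)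
        rw [show (1-s)-1 = -s by ring, show (s+m-1)-1 = s+m-2 by ring,
          show (1-s)+(s+m-1) = m by ring] at hv
        rw [← integral_Ioc_eq_integral_Ioo,
          ← intervalIntegral.integral_of_le (by norm_num : (0:ℝ) ≤ 1), hv]
        ring
end

section
/- Suppose s < 1, m + s > 1, and k > −1. Then there exists a finite constant C, depending only on s, m, and k, such that for every x with 0 ≤ x < 1, ∫₀¹ (1 − y)^{−s} y^k / (1 − x y)^m dy ≤ C (1 − x)^{1−s−m}. -/
open MeasureTheory Set intervalIntegral

/-- Pointwise splitting of a two-singularity product into two one-singularity pieces. -/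
lemma claimA15 (k p y : ℝ) (hy0 : 0 ≤ y) (hy1 : y ≤ 1) :
    (1 - y) ^ (-p) * y ^ k ≤
      max 1 (2 ^ p) * y ^ k + max 1 ((2:ℝ) ^ (-k)) * (1 - y) ^ (-p) := by
  have h1y0 : 0 ≤ 1 - y := by linarith
  rcases le_total y (1/2) with h | h
  · have h1 : (1 - y) ^ (-p) ≤ max 1 ((2:ℝ) ^ p) := by
      rcases le_total 0 p with hp | hp
      · refine le_trans ?_ (le_max_right _ _)
        have : ((1:ℝ)/2) ^ (-p) = (2:ℝ) ^ p := by
          rw [one_div, Real.inv_rpow (by norm_num), ← Real.rpow_neg (by norm_num), neg_neg]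
        rw [← this]
        exact Real.rpow_le_rpow_of_nonpos (by norm_num) (by linarith) (by linarith)
      · refine le_trans ?_ (le_max_left _ _)
        exact Real.rpow_le_one h1y0 (by linarith) (by linarith)
    have h2 : (1 - y) ^ (-p) * y ^ k ≤ max 1 ((2:ℝ) ^ p) * y ^ k :=
      mul_le_mul_of_nonneg_right h1 (Real.rpow_nonneg hy0 _)
    have h3 : 0 ≤ max 1 ((2:ℝ) ^ (-k)) * (1 - y) ^ (-p) := by positivity
    linarith
  · have h1 : y ^ k ≤ max 1 ((2:ℝ) ^ (-k)) := by
      rcases le_total 0 k with hkk | hkk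
      · exact le_trans (Real.rpow_le_one hy0 hy1 hkk) (le_max_left _ _)
      · refine le_trans ?_ (le_max_right _ _)
        have : ((1:ℝ)/2) ^ k = (2:ℝ) ^ (-k) := by
          rw [one_div, Real.inv_rpow (by norm_num), ← Real.rpow_neg (by norm_num)]
        rw [← this]
        exact Real.rpow_le_rpow_of_nonpos (by norm_num) (by linarith) hkk
    have h2 : (1 - y) ^ (-p) * y ^ k ≤ max 1 ((2:ℝ) ^ (-k)) * (1 - y) ^ (-p) := by
      rw [mul_comm]
      exact mul_le_mul_of_nonneg_right h1 (Real.rpow_nonneg h1y0 _)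
    have h3 : 0 ≤ max 1 ((2:ℝ) ^ p) * y ^ k := by positivity
    linarith

lemma int_one_sub15 (p : ℝ) (hp : p < 1) :
    IntervalIntegrable (fun y : ℝ => (1 - y) ^ (-p)) volume 0 1 := by
  have h := (intervalIntegrable_rpow' (r := -p) (by linarith)
    (a := 0) (b := 1)).comp_sub_left 1
  simpa using h.symm

theorem stmt15 (s m k : ℝ) (hs : s < 1) (hms : 1 < m + s) (hk : -1 < k) :
    ∃ C : ℝ, ∀ x : ℝ, 0 ≤ x → x < 1 →
      ∫ y in (0:ℝ)..1, (1 - y) ^ (-s) * y ^ k / (1 - x * y) ^ m ≤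
        C * (1 - x) ^ (1 - s - m) := by
  have hm : 0 < m := by linarith
  have hk1 : 0 < k + 1 := by linarith
  have hs1 : 0 < 1 - s := by linarith
  have hsm1 : 0 < s + m - 1 := by linarith
  set Ms : ℝ := max 1 (2 ^ s) with hMs
  set Msm : ℝ := max 1 (2 ^ (s + m)) with hMsm
  set ck : ℝ := max 1 ((2:ℝ) ^ (-k)) with hck
  have hMs0 : 0 < Ms := lt_of_lt_of_le one_pos (le_max_left _ _)
  have hMsm0 : 0 < Msm := lt_of_lt_of_le one_pos (le_max_left _ _)
  have hck0 : 0 < ck := lt_of_lt_of_le one_pos (le_max_left _ _)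
  refine ⟨2 ^ m * (Ms / (k + 1) + ck / (1 - s)) + (Msm / (k + 1) + ck / (s + m - 1)
    + ck / (1 - s)), ?_⟩
  intro x hx0 hx1
  have h1x : 0 < 1 - x := by linarith
  set R : ℝ := (1 - x) ^ (1 - s - m) with hR
  have hR1 : 1 ≤ R :=
    Real.one_le_rpow_of_pos_of_le_one_of_nonpos h1x (by linarith) (by linarith)
  have hR0 : 0 < R := lt_of_lt_of_le one_pos hR1
  -- basic integrability facts
  have hJ : IntervalIntegrable (fun y : ℝ => y ^ k) volume 0 1 :=
    intervalIntegrable_rpow' hk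
  have hK : IntervalIntegrable (fun y : ℝ => (1 - y) ^ (-s)) volume 0 1 :=
    int_one_sub15 s hs
  -- values of basic integrals
  have hJval : ∫ y in (0:ℝ)..1, y ^ k = 1 / (k + 1) := by
    rw [integral_rpow (Or.inl hk), Real.one_rpow, Real.zero_rpow (by linarith)]
    ring
  have hKval : ∀ a : ℝ, a ≤ 1 → 0 ≤ a →
      ∫ y in a..1, (1 - y) ^ (-s) = (1 - a) ^ (-s + 1) / (-s + 1) := by
    intro a ha ha0
    have := integral_comp_sub_left (a := a) (b := 1) (fun u : ℝ => u ^ (-s)) 1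
    rw [this]
    norm_num
    rw [integral_rpow (Or.inl (by linarith))]
    rw [Real.zero_rpow (by linarith)]
    ring
  -- measurability of the integrand
  have hmeas : ∀ a b : ℝ, AEStronglyMeasurable
      (fun y : ℝ => (1 - y) ^ (-s) * y ^ k / (1 - x * y) ^ m)
      (volume.restrict (Set.uIoc a b)) := by
    intro a b
    apply Measurable.aestronglyMeasurable
    fun_prop
  -- pointwise nonnegativity and the global comparison on [0,1]
  have hf_nonneg : ∀ y : ℝ, 0 ≤ y → y ≤ 1 →
      0 ≤ (1 - y) ^ (-s) * y ^ k / (1 - x * y) ^ m := by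
    intro y hy0 hy1
    have h' : 0 ≤ 1 - x * y := by nlinarith
    exact div_nonneg (mul_nonneg (Real.rpow_nonneg (by linarith) _)
      (Real.rpow_nonneg hy0 _)) (Real.rpow_nonneg h' _)
  -- key denominator bound : for 0 ≤ y ≤ 1, (1-x*y)^m ≥ (1-x)^m
  have hden : ∀ y : ℝ, 0 ≤ y → y ≤ 1 → (1 - x) ^ m ≤ (1 - x * y) ^ m := by
    intro y hy0 hy1
    apply Real.rpow_le_rpow h1x.le (by nlinarith) hm.le
  -- the integrand is dominated on [0,1] by an integrable function
  have hdom : ∀ y : ℝ, 0 ≤ y → y ≤ 1 →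
      (1 - y) ^ (-s) * y ^ k / (1 - x * y) ^ m ≤
        ((1 - x) ^ m)⁻¹ * (Ms * y ^ k + ck * (1 - y) ^ (-s)) := by
    intro y hy0 hy1
    have hnum0 : 0 ≤ (1 - y) ^ (-s) * y ^ k :=
      mul_nonneg (Real.rpow_nonneg (by linarith) _) (Real.rpow_nonneg hy0 _)
    have hxm : 0 < (1 - x) ^ m := Real.rpow_pos_of_pos h1x m
    have h1 : (1 - y) ^ (-s) * y ^ k / (1 - x * y) ^ m ≤
        (1 - y) ^ (-s) * y ^ k / (1 - x) ^ m :=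
      div_le_div_of_nonneg_left hnum0 hxm (hden y hy0 hy1)
    calc (1 - y) ^ (-s) * y ^ k / (1 - x * y) ^ m
        ≤ (1 - y) ^ (-s) * y ^ k / (1 - x) ^ m := h1
      _ = ((1 - x) ^ m)⁻¹ * ((1 - y) ^ (-s) * y ^ k) := by ring
      _ ≤ ((1 - x) ^ m)⁻¹ * (Ms * y ^ k + ck * (1 - y) ^ (-s)) := by
          apply mul_le_mul_of_nonneg_left (claimA15 k s y hy0 hy1) (by positivity)
  have hgint : IntervalIntegrable
      (fun y : ℝ => ((1 - x) ^ m)⁻¹ * (Ms * y ^ k + ck * (1 - y) ^ (-s))) volume 0 1 :=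
    (((hJ.const_mul Ms).add (hK.const_mul ck)).const_mul _)
  have hfint : IntervalIntegrable
      (fun y : ℝ => (1 - y) ^ (-s) * y ^ k / (1 - x * y) ^ m) volume 0 1 := by
    apply hgint.mono_fun' (hmeas 0 1)
    filter_upwards [MeasureTheory.ae_restrict_mem measurableSet_uIoc] with y hy
    rw [Set.uIoc_of_le (by norm_num : (0:ℝ) ≤ 1)] at hy
    rw [Real.norm_of_nonneg (hf_nonneg y hy.1.le hy.2)]
    exact hdom y hy.1.le hy.2
  rcases le_total x (1/2) with hx2 | hx2
  · -- easy case : x ≤ 1/2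
    have hbound : ∀ y ∈ Set.Icc (0:ℝ) 1,
        (1 - y) ^ (-s) * y ^ k / (1 - x * y) ^ m ≤
          2 ^ m * (Ms * y ^ k + ck * (1 - y) ^ (-s)) := by
      intro y hy
      obtain ⟨hy0, hy1⟩ := hy
      calc (1 - y) ^ (-s) * y ^ k / (1 - x * y) ^ m
          ≤ ((1 - x) ^ m)⁻¹ * (Ms * y ^ k + ck * (1 - y) ^ (-s)) := hdom y hy0 hy1
        _ ≤ 2 ^ m * (Ms * y ^ k + ck * (1 - y) ^ (-s)) := by
            apply mul_le_mul_of_nonneg_right _ (add_nonneg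
              (mul_nonneg hMs0.le (Real.rpow_nonneg hy0 _))
              (mul_nonneg hck0.le (Real.rpow_nonneg (by linarith) _)))
            rw [show (2:ℝ) ^ m = (((1:ℝ)/2) ^ m)⁻¹ by
              rw [one_div, Real.inv_rpow (by norm_num), inv_inv]]
            apply inv_anti₀ (Real.rpow_pos_of_pos (by norm_num) m)
            exact Real.rpow_le_rpow (by norm_num) (by linarith) hm.le
    have hmon := integral_mono_on (by norm_num : (0:ℝ) ≤ 1) hfint
      ((((hJ.const_mul Ms).add (hK.const_mul ck)).const_mul _)) hbound
    have hval : ∫ y in (0:ℝ)..1, 2 ^ m * (Ms * y ^ k + ck * (1 - y) ^ (-s))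
        = 2 ^ m * (Ms * (1/(k+1)) + ck * ((1:ℝ) ^ (-s+1) / (-s+1))) := by
      rw [intervalIntegral.integral_const_mul, integral_add (hJ.const_mul Ms) (hK.const_mul ck),
        intervalIntegral.integral_const_mul, intervalIntegral.integral_const_mul, hJval, hKval 0 (by norm_num) le_rfl]
      norm_num
    have h1R : ((1:ℝ)) ^ (-s+1) = 1 := Real.one_rpow _
    calc ∫ y in (0:ℝ)..1, (1 - y) ^ (-s) * y ^ k / (1 - x * y) ^ m
        ≤ 2 ^ m * (Ms * (1/(k+1)) + ck * ((1:ℝ) ^ (-s+1) / (-s+1))) := hval ▸ hmon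
      _ = 2 ^ m * (Ms / (k + 1) + ck / (1 - s)) := by rw [h1R]; ring
      _ ≤ (2 ^ m * (Ms / (k + 1) + ck / (1 - s))) * R := by
          nth_rewrite 1 [← mul_one (2 ^ m * (Ms / (k + 1) + ck / (1 - s)))]
          apply mul_le_mul_of_nonneg_left hR1 (by positivity)
      _ ≤ (2 ^ m * (Ms / (k + 1) + ck / (1 - s)) + (Msm / (k + 1) + ck / (s + m - 1)
            + ck / (1 - s))) * R := by
          apply mul_le_mul_of_nonneg_right _ hR0.le
          have : 0 ≤ Msm / (k + 1) + ck / (s + m - 1) + ck / (1 - s) := by positivity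
          linarith
  · -- hard case : 1/2 ≤ x ; split the integral at x
    have h01 : (0:ℝ) ≤ 1 := by norm_num
    have hsub1 : Set.uIoc 0 x ⊆ Set.uIoc (0:ℝ) 1 := by
      rw [Set.uIoc_of_le hx0, Set.uIoc_of_le h01]
      exact Set.Ioc_subset_Ioc le_rfl hx1.le
    have hsub2 : Set.uIoc x 1 ⊆ Set.uIoc (0:ℝ) 1 := by
      rw [Set.uIoc_of_le hx1.le, Set.uIoc_of_le h01]
      exact Set.Ioc_subset_Ioc hx0 le_rfl
    have hfint1 : IntervalIntegrable
        (fun y : ℝ => (1 - y) ^ (-s) * y ^ k / (1 - x * y) ^ m) volume 0 x :=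
      hfint.mono_set' hsub1
    have hfint2 : IntervalIntegrable
        (fun y : ℝ => (1 - y) ^ (-s) * y ^ k / (1 - x * y) ^ m) volume x 1 :=
      hfint.mono_set' hsub2
    have hsplit : ∫ y in (0:ℝ)..1, (1 - y) ^ (-s) * y ^ k / (1 - x * y) ^ m
        = (∫ y in (0:ℝ)..x, (1 - y) ^ (-s) * y ^ k / (1 - x * y) ^ m)
          + ∫ y in x..(1:ℝ), (1 - y) ^ (-s) * y ^ k / (1 - x * y) ^ m :=
      (integral_add_adjacent_intervals hfint1 hfint2).symm
    -- part I : ∫_0^x ≤ Msm/(k+1) + ck/(s+m-1) * R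
    have hKsm : IntervalIntegrable (fun y : ℝ => (1 - y) ^ (-(s+m))) volume 0 x := by
      have h0 : (0:ℝ) ∉ Set.uIcc (1 - x) 1 := by
        rw [Set.uIcc_of_le (by linarith)]
        intro h; exact absurd h.1 (by linarith)
      have h := (intervalIntegrable_rpow (μ := volume) (r := -(s+m)) (a := 1 - x) (b := 1)
        (Or.inr h0)).comp_sub_left 1
      simpa using h.symm
    have hbound1 : ∀ y ∈ Set.Icc (0:ℝ) x,
        (1 - y) ^ (-s) * y ^ k / (1 - x * y) ^ m ≤
          Msm * y ^ k + ck * (1 - y) ^ (-(s+m)) := by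
      intro y hy
      obtain ⟨hy0, hyx⟩ := hy
      have hy1 : y ≤ 1 := le_trans hyx hx1.le
      have h1y : 0 < 1 - y := by nlinarith
      have hnum0 : 0 ≤ (1 - y) ^ (-s) * y ^ k :=
        mul_nonneg (Real.rpow_nonneg h1y.le _) (Real.rpow_nonneg hy0 _)
      have hden2 : (1 - y) ^ m ≤ (1 - x * y) ^ m :=
        Real.rpow_le_rpow h1y.le (by nlinarith) hm.le
      calc (1 - y) ^ (-s) * y ^ k / (1 - x * y) ^ m
          ≤ (1 - y) ^ (-s) * y ^ k / (1 - y) ^ m :=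
            div_le_div_of_nonneg_left hnum0 (Real.rpow_pos_of_pos h1y m) hden2
        _ = (1 - y) ^ (-(s+m)) * y ^ k := by
            rw [div_eq_mul_inv, ← Real.rpow_neg h1y.le,
              show -(s+m) = -s + -m by ring, Real.rpow_add h1y]
            ring
        _ ≤ Msm * y ^ k + ck * (1 - y) ^ (-(s+m)) := claimA15 k (s+m) y hy0 hy1
    have hmon1 := integral_mono_on hx0 hfint1
      ((((hJ.mono_set' hsub1)).const_mul Msm).add (hKsm.const_mul ck)) hbound1
    have hval1 : ∫ y in (0:ℝ)..x, (Msm * y ^ k + ck * (1 - y) ^ (-(s+m)))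
        ≤ Msm / (k+1) + ck / (s+m-1) * R := by
      rw [integral_add ((hJ.mono_set' hsub1).const_mul Msm) (hKsm.const_mul ck),
        intervalIntegral.integral_const_mul, intervalIntegral.integral_const_mul]
      have e1 : ∫ y in (0:ℝ)..x, y ^ k = x ^ (k+1) / (k+1) := by
        rw [integral_rpow (Or.inl hk), Real.zero_rpow (by linarith)]; ring
      have e2 : ∫ y in (0:ℝ)..x, (1 - y) ^ (-(s+m))
          = (1 - (1-x) ^ (-(s+m)+1)) / (-(s+m)+1) := by
        have h := integral_comp_sub_left (a := (0:ℝ)) (b := x) (fun u : ℝ => u ^ (-(s+m))) 1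
        rw [h, sub_zero,
          integral_rpow (Or.inr ⟨by intro h'; linarith,
            by rw [Set.uIcc_of_le (by linarith)]; intro h'; exact absurd h'.1 (by linarith)⟩),
          Real.one_rpow]
      rw [e1, e2]
      have hA : Msm * (x ^ (k+1) / (k+1)) ≤ Msm / (k+1) := by
        have hx1' : x ^ (k+1) ≤ 1 := Real.rpow_le_one hx0 hx1.le hk1.le
        have h2 : x ^ (k+1) * (k+1)⁻¹ ≤ 1 * (k+1)⁻¹ :=
          mul_le_mul_of_nonneg_right hx1' (inv_nonneg.2 hk1.le)
        calc Msm * (x ^ (k+1) / (k+1)) = Msm * (x ^ (k+1) * (k+1)⁻¹) := by ring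
          _ ≤ Msm * (1 * (k+1)⁻¹) := mul_le_mul_of_nonneg_left h2 hMsm0.le
          _ = Msm / (k+1) := by ring
      have hB : ck * ((1 - (1-x) ^ (-(s+m)+1)) / (-(s+m)+1)) ≤ ck / (s+m-1) * R := by
        have hexp : -(s+m)+1 = 1 - s - m := by ring
        rw [hexp]
        have : (1 - (1-x) ^ (1-s-m)) / (1-s-m) = ((1-x) ^ (1-s-m) - 1) / (s+m-1) := by
          rw [div_eq_div_iff (by linarith) (by linarith)]; ring
        rw [this, ← hR]
        have h1 : (R - 1) / (s+m-1) ≤ R / (s+m-1) := by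
          have h2 : (R - 1) * (s+m-1)⁻¹ ≤ R * (s+m-1)⁻¹ :=
            mul_le_mul_of_nonneg_right (by linarith) (inv_nonneg.2 hsm1.le)
          simpa [div_eq_mul_inv] using h2
        calc ck * ((R - 1) / (s+m-1)) ≤ ck * (R / (s+m-1)) :=
              mul_le_mul_of_nonneg_left h1 hck0.le
          _ = ck / (s+m-1) * R := by ring
      linarith
    -- part II : ∫_x^1 ≤ ck/(1-s) * R
    have hKx : IntervalIntegrable (fun y : ℝ => (1 - y) ^ (-s)) volume x 1 :=
      hK.mono_set' hsub2
    have hbound2 : ∀ y ∈ Set.Icc x (1:ℝ),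
        (1 - y) ^ (-s) * y ^ k / (1 - x * y) ^ m ≤
          (ck * ((1 - x) ^ m)⁻¹) * (1 - y) ^ (-s) := by
      intro y hy
      obtain ⟨hyx, hy1⟩ := hy
      have hy0 : 0 ≤ y := le_trans (by linarith) hyx
      have h1y : 0 ≤ 1 - y := by linarith
      have hyk : y ^ k ≤ ck := by
        rcases le_total 0 k with hkk | hkk
        · exact le_trans (Real.rpow_le_one hy0 hy1 hkk) (le_max_left _ _)
        · refine le_trans ?_ (le_max_right _ _)
          have : ((1:ℝ)/2) ^ k = (2:ℝ) ^ (-k) := by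
            rw [one_div, Real.inv_rpow (by norm_num), ← Real.rpow_neg (by norm_num)]
          rw [← this]
          exact Real.rpow_le_rpow_of_nonpos (by norm_num) (by linarith) hkk
      have hnum0 : 0 ≤ (1 - y) ^ (-s) * y ^ k :=
        mul_nonneg (Real.rpow_nonneg h1y _) (Real.rpow_nonneg hy0 _)
      calc (1 - y) ^ (-s) * y ^ k / (1 - x * y) ^ m
          ≤ (1 - y) ^ (-s) * y ^ k / (1 - x) ^ m :=
            div_le_div_of_nonneg_left hnum0 (Real.rpow_pos_of_pos h1x m) (hden y hy0 hy1)
        _ = (y ^ k * ((1 - x) ^ m)⁻¹) * (1 - y) ^ (-s) := by ring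
        _ ≤ (ck * ((1 - x) ^ m)⁻¹) * (1 - y) ^ (-s) := by
            apply mul_le_mul_of_nonneg_right _ (Real.rpow_nonneg h1y _)
            exact mul_le_mul_of_nonneg_right hyk (by positivity)
    have hmon2 := integral_mono_on hx1.le hfint2 (hKx.const_mul _) hbound2
    have hval2 : ∫ y in x..(1:ℝ), (ck * ((1 - x) ^ m)⁻¹) * (1 - y) ^ (-s)
        = ck / (1 - s) * R := by
      rw [intervalIntegral.integral_const_mul, hKval x hx1.le hx0]
      have hme : ((1 - x) ^ m)⁻¹ * (1 - x) ^ (-s+1) = R := by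
        rw [← Real.rpow_neg h1x.le, ← Real.rpow_add h1x, hR]
        congr 1
        ring
      have : ck * ((1-x)^m)⁻¹ * ((1-x)^(-s+1)/(-s+1))
          = ck/(-s+1) * (((1-x)^m)⁻¹ * (1-x)^(-s+1)) := by ring
      rw [this, hme, show -s+1 = 1-s by ring]
    have hA0 : (0:ℝ) ≤ 2 ^ m * (Ms / (k + 1) + ck / (1 - s)) := by positivity
    have hMsmR : Msm / (k+1) ≤ Msm / (k+1) * R :=
      le_mul_of_one_le_right (by positivity) hR1
    calc ∫ y in (0:ℝ)..1, (1 - y) ^ (-s) * y ^ k / (1 - x * y) ^ m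
        = (∫ y in (0:ℝ)..x, (1 - y) ^ (-s) * y ^ k / (1 - x * y) ^ m)
          + ∫ y in x..(1:ℝ), (1 - y) ^ (-s) * y ^ k / (1 - x * y) ^ m := hsplit
      _ ≤ (Msm / (k+1) + ck / (s+m-1) * R) + ck / (1 - s) * R :=
          add_le_add (hmon1.trans hval1) (hmon2.trans (le_of_eq hval2))
      _ ≤ (2 ^ m * (Ms / (k + 1) + ck / (1 - s)) + (Msm / (k + 1) + ck / (s + m - 1)
            + ck / (1 - s))) * R := by
          have hAR : 0 ≤ 2 ^ m * (Ms / (k + 1) + ck / (1 - s)) * R :=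
            mul_nonneg hA0 hR0.le
          ring_nf
          ring_nf at hAR hMsmR
          linarith
end

section
/- Suppose 1 < p < ∞, j > −1, k > −1, m > 0, u < 1, and u > 1 − m p, and set w = u + (m − 1)p. Then there exists a finite constant C, depending only on p, m, k, j, and u, with the following property: for every measurable f : (0,1) → ℂ, if g(x) = ∫₀¹ |f(y)| y^k / (1 − x y)^m dy for x ∈ (0,1) (allowing the value ∞), then (∫₀¹ g(x)^p x^j (1 − x)^{−u} dx)^{1/p} ≤ C (∫₀¹ |f(y)|^p y^k (1 − y)^{−w} dy)^{1/p}. -/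
open MeasureTheory Set ENNReal intervalIntegral


lemma lintA {α : ℝ} (hα : -1 < α) :
    ∫⁻ y in Ioo (0:ℝ) 1, ENNReal.ofReal (y ^ α) ≤ ENNReal.ofReal (1/(α+1)) := by
  have hint : IntegrableOn (fun y : ℝ => y ^ α) (Ioo 0 1) volume := by
    rw [← intervalIntegrable_iff_integrableOn_Ioo_of_le (by norm_num : (0:ℝ) ≤ 1)]
    exact intervalIntegral.intervalIntegrable_rpow' hα
  rw [← ofReal_integral_eq_lintegral_ofReal hint]
  · apply ENNReal.ofReal_le_ofReal
    have : ∫ y in Ioo (0:ℝ) 1, y ^ α = ∫ y in (0:ℝ)..1, y ^ α := by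
      rw [intervalIntegral.integral_of_le (by norm_num : (0:ℝ) ≤ 1),
        MeasureTheory.integral_Ioc_eq_integral_Ioo]
    rw [this, integral_rpow (Or.inl hα)]
    rw [Real.one_rpow, Real.zero_rpow (by linarith)]
    norm_num
  · filter_upwards [ae_restrict_mem measurableSet_Ioo] with y hy
    exact Real.rpow_nonneg hy.1.le _

lemma lintB {β x : ℝ} (hβ : -1 < β) (hx0 : 0 ≤ x) (hx1 : x < 1) :
    ∫⁻ y in Ioo x 1, ENNReal.ofReal ((1-y)^β) ≤ ENNReal.ofReal ((1-x)^(β+1)/(β+1)) := by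
  have hii : IntervalIntegrable (fun y : ℝ => (1-y) ^ β) volume x 1 := by
    have h0 : IntervalIntegrable (fun t : ℝ => t ^ β) volume 0 (1 - x) :=
      intervalIntegral.intervalIntegrable_rpow' hβ
    have := (h0.comp_sub_left 1).symm
    simpa using this
  have hint : IntegrableOn (fun y : ℝ => (1-y) ^ β) (Ioo x 1) volume := by
    rw [← intervalIntegrable_iff_integrableOn_Ioo_of_le hx1.le]; exact hii
  rw [← ofReal_integral_eq_lintegral_ofReal hint]
  · apply ENNReal.ofReal_le_ofReal
    have : ∫ y in Ioo x 1, (1-y) ^ β = ∫ y in x..1, (1-y) ^ β := by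
      rw [intervalIntegral.integral_of_le hx1.le, MeasureTheory.integral_Ioc_eq_integral_Ioo]
    rw [this]
    have hc : (∫ y in x..1, (1-y) ^ β) = ∫ t in (0:ℝ)..(1-x), t ^ β := by
      have := intervalIntegral.integral_comp_sub_left (a := x) (b := 1) (fun t : ℝ => t ^ β) 1
      simpa using this
    rw [hc, integral_rpow (Or.inl hβ), Real.zero_rpow (by linarith)]
    norm_num
  · filter_upwards [ae_restrict_mem measurableSet_Ioo] with y hy
    exact Real.rpow_nonneg (by linarith [hy.2]) _

lemma lintC {γ x : ℝ} (hγ : γ < -1) (hx0 : 0 < x) (hx1 : x < 1) :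
    ∫⁻ y in Ioo 0 x, ENNReal.ofReal ((1-y)^γ) ≤ ENNReal.ofReal ((1-x)^(γ+1)/(-γ-1)) := by
  have hii : IntervalIntegrable (fun y : ℝ => (1-y) ^ γ) volume 0 x := by
    apply ContinuousOn.intervalIntegrable
    apply ContinuousOn.rpow_const (by fun_prop)
    intro y hy
    rw [uIcc_of_le hx0.le] at hy
    left; intro h; linarith [hy.2, hx1]
  have hint : IntegrableOn (fun y : ℝ => (1-y) ^ γ) (Ioo 0 x) volume := by
    rw [← intervalIntegrable_iff_integrableOn_Ioo_of_le hx0.le]; exact hii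
  rw [← ofReal_integral_eq_lintegral_ofReal hint]
  · apply ENNReal.ofReal_le_ofReal
    have : ∫ y in Ioo 0 x, (1-y) ^ γ = ∫ y in (0:ℝ)..x, (1-y) ^ γ := by
      rw [intervalIntegral.integral_of_le hx0.le, MeasureTheory.integral_Ioc_eq_integral_Ioo]
    rw [this]
    have hc : (∫ y in (0:ℝ)..x, (1-y) ^ γ) = ∫ t in (1-x)..(1:ℝ), t ^ γ := by
      have := intervalIntegral.integral_comp_sub_left (a := 0) (b := x) (fun t : ℝ => t ^ γ) 1
      simpa using this
    rw [hc, integral_rpow (Or.inr ⟨by linarith, by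
      rw [uIcc_of_le (by linarith : 1 - x ≤ 1)]
      intro h; exact absurd h.1 (by linarith)⟩)]
    rw [Real.one_rpow]
    set A := (1-x) ^ (γ+1) with hA
    have key : (1 - A)/(γ+1) = (A - 1)/(-γ-1) := by
      rw [div_eq_div_iff (by linarith) (by linarith)]; ring
    rw [key, div_le_div_iff_of_pos_right (by linarith : (0:ℝ) < -γ-1)]
    linarith
  · filter_upwards [ae_restrict_mem measurableSet_Ioo] with y hy
    exact Real.rpow_nonneg (by linarith [hy.2, hx1]) _

lemma aux_half {t c : ℝ} (ht : 1/2 ≤ t) (ht1 : t ≤ 1) : t ^ c ≤ max 1 (2^(-c)) := by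
  rcases le_or_gt 0 c with hc | hc
  · exact le_max_of_le_left (Real.rpow_le_one (by linarith) ht1 hc)
  · refine le_max_of_le_right ?_
    have : t ^ c ≤ (2⁻¹ : ℝ) ^ c := Real.rpow_le_rpow_of_nonpos (by norm_num) (by linarith) hc.le
    calc t ^ c ≤ (2⁻¹ : ℝ) ^ c := this
      _ = (2:ℝ) ^ (-c) := by
          rw [Real.inv_rpow (by norm_num), ← Real.rpow_neg (by norm_num)]

lemma lemK {α β m : ℝ} (hα : -1 < α) (hβ : -1 < β) (hβm : β < m - 1) :
    ∃ C : ℝ≥0∞, C ≠ ⊤ ∧ ∀ x ∈ Ioo (0:ℝ) 1,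
      (∫⁻ y in Ioo (0:ℝ) 1, ENNReal.ofReal (y^α * (1-y)^β * (1-x*y)^(-m)))
        ≤ C * ENNReal.ofReal ((1-x)^(β+1-m)) := by
  have hm : 0 < m := by linarith
  set cα : ℝ := max 1 (2^(-α)) with hcα
  set cβ : ℝ := max 1 (2^(-β)) with hcβ
  have hcα0 : 0 < cα := lt_of_lt_of_le one_pos (le_max_left _ _)
  have hcβ0 : 0 < cβ := lt_of_lt_of_le one_pos (le_max_left _ _)
  set C1 : ℝ≥0∞ := ENNReal.ofReal ((2:ℝ)^m * cβ) * ENNReal.ofReal (1/(α+1)) with hC1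
  set C2 : ℝ≥0∞ := ENNReal.ofReal cα * ENNReal.ofReal (1/(m-β-1)) with hC2
  set C3 : ℝ≥0∞ := ENNReal.ofReal cα * ENNReal.ofReal (1/(β+1)) with hC3
  refine ⟨C1 + C2 + C3, by finiteness, ?_⟩
  rintro x ⟨hx0, hx1⟩
  have hs0 : (0:ℝ) < 1 - x := by linarith
  have htarget1 : 1 ≤ ENNReal.ofReal ((1-x)^(β+1-m)) := by
    rw [← ENNReal.ofReal_one]
    apply ENNReal.ofReal_le_ofReal
    apply Real.one_le_rpow_of_pos_of_le_one_of_nonpos hs0 (by linarith) (by linarith)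
  have hcover : Ioo (0:ℝ) 1 ⊆ Ioc 0 (1/2) ∪ Ioo (1/2) x ∪ (Ico x 1 ∩ Ioi (1/2)) := by
    rintro y ⟨hy0, hy1⟩
    rcases le_or_gt y (1/2) with h | h
    · exact Or.inl (Or.inl ⟨hy0, h⟩)
    rcases lt_or_ge y x with h2 | h2
    · exact Or.inl (Or.inr ⟨h, h2⟩)
    · exact Or.inr ⟨⟨h2, hy1⟩, h⟩
  set f : ℝ → ℝ≥0∞ := fun y => ENNReal.ofReal (y^α * (1-y)^β * (1-x*y)^(-m)) with hf
  have hsplit : (∫⁻ y in Ioo (0:ℝ) 1, f y)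
      ≤ (∫⁻ y in Ioc (0:ℝ) (1/2), f y) + (∫⁻ y in Ioo (1/2) x, f y)
        + (∫⁻ y in Ico x 1 ∩ Ioi (1/2), f y) := by
    calc (∫⁻ y in Ioo (0:ℝ) 1, f y)
        ≤ ∫⁻ y in Ioc 0 (1/2) ∪ Ioo (1/2) x ∪ (Ico x 1 ∩ Ioi (1/2)), f y :=
          lintegral_mono_set hcover
      _ ≤ (∫⁻ y in Ioc (0:ℝ) (1/2) ∪ Ioo (1/2) x, f y)
          + (∫⁻ y in Ico x 1 ∩ Ioi (1/2), f y) := lintegral_union_le _ _ _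
      _ ≤ _ := by
          gcongr
          exact lintegral_union_le _ _ _
  -- Piece 1
  have hP1 : (∫⁻ y in Ioc (0:ℝ) (1/2), f y) ≤ C1 := by
    have hb : ∀ y ∈ Ioc (0:ℝ) (1/2), f y ≤ ENNReal.ofReal ((2:ℝ)^m * cβ * y^α) := by
      rintro y ⟨hy0, hy2⟩
      apply ENNReal.ofReal_le_ofReal
      have h1 : (1-y)^β ≤ cβ := aux_half (by linarith) (by linarith)
      have hxy : (1:ℝ)/2 ≤ 1 - x*y := by nlinarith
      have h2 : (1-x*y)^(-m) ≤ (2:ℝ)^m := by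
        calc (1-x*y)^(-m) ≤ (2⁻¹:ℝ)^(-m) :=
              Real.rpow_le_rpow_of_nonpos (by norm_num) (by linarith) (by linarith)
          _ = (2:ℝ)^m := by
              rw [Real.inv_rpow (by norm_num), ← Real.rpow_neg (by norm_num), neg_neg]
      have hy' : (0:ℝ) ≤ y ^ α := Real.rpow_nonneg hy0.le _
      calc y^α * (1-y)^β * (1-x*y)^(-m)
          ≤ y^α * cβ * (1-x*y)^(-m) :=
            mul_le_mul_of_nonneg_right (mul_le_mul_of_nonneg_left h1 hy')
              (Real.rpow_nonneg (by linarith) _)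
        _ ≤ y^α * cβ * (2:ℝ)^m :=
            mul_le_mul_of_nonneg_left h2 (mul_nonneg hy' hcβ0.le)
        _ = (2:ℝ)^m * cβ * y^α := by ring
    calc (∫⁻ y in Ioc (0:ℝ) (1/2), f y)
        ≤ ∫⁻ y in Ioc (0:ℝ) (1/2), ENNReal.ofReal ((2:ℝ)^m * cβ * y^α) :=
          setLIntegral_mono (by fun_prop) hb
      _ = ∫⁻ y in Ioc (0:ℝ) (1/2), ENNReal.ofReal ((2:ℝ)^m * cβ) * ENNReal.ofReal (y^α) := by
          apply setLIntegral_congr_fun_ae measurableSet_Ioc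
          filter_upwards with y hy
          rw [← ENNReal.ofReal_mul (by positivity)]
      _ = ENNReal.ofReal ((2:ℝ)^m * cβ) * ∫⁻ y in Ioc (0:ℝ) (1/2), ENNReal.ofReal (y^α) :=
          lintegral_const_mul _ (by fun_prop)
      _ ≤ ENNReal.ofReal ((2:ℝ)^m * cβ) * ∫⁻ y in Ioo (0:ℝ) 1, ENNReal.ofReal (y^α) := by
          gcongr
          norm_num
      _ ≤ C1 := by rw [hC1]; gcongr; exact lintA hα
  -- Piece 2
  have hP2 : (∫⁻ y in Ioo (1/2:ℝ) x, f y)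
      ≤ C2 * ENNReal.ofReal ((1-x)^(β+1-m)) := by
    have hb : ∀ y ∈ Ioo (1/2:ℝ) x, f y ≤ ENNReal.ofReal (cα * (1-y)^(β-m)) := by
      rintro y ⟨hy2, hyx⟩
      apply ENNReal.ofReal_le_ofReal
      have hy1 : y < 1 := lt_trans hyx hx1
      have h1y : (0:ℝ) < 1 - y := by linarith
      have hxy0 : (0:ℝ) < 1 - x*y := by nlinarith
      have h1 : y^α ≤ cα := aux_half (by linarith) (by linarith)
      have h2 : (1-x*y)^(-m) ≤ (1-y)^(-m) :=
        Real.rpow_le_rpow_of_nonpos h1y (by nlinarith) (by linarith)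
      calc y^α * (1-y)^β * (1-x*y)^(-m)
          ≤ cα * (1-y)^β * (1-x*y)^(-m) :=
            mul_le_mul_of_nonneg_right
              (mul_le_mul_of_nonneg_right h1 (Real.rpow_nonneg h1y.le _))
              (Real.rpow_nonneg hxy0.le _)
        _ ≤ cα * (1-y)^β * (1-y)^(-m) :=
            mul_le_mul_of_nonneg_left h2
              (mul_nonneg hcα0.le (Real.rpow_nonneg h1y.le _))
        _ = cα * (1-y)^(β-m) := by
            rw [mul_assoc, ← Real.rpow_add h1y, show β + -m = β-m by ring]
    calc (∫⁻ y in Ioo (1/2:ℝ) x, f y)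
        ≤ ∫⁻ y in Ioo (1/2:ℝ) x, ENNReal.ofReal (cα * (1-y)^(β-m)) :=
          setLIntegral_mono (by fun_prop) hb
      _ = ∫⁻ y in Ioo (1/2:ℝ) x, ENNReal.ofReal cα * ENNReal.ofReal ((1-y)^(β-m)) := by
          apply setLIntegral_congr_fun_ae measurableSet_Ioo
          filter_upwards with y hy
          rw [← ENNReal.ofReal_mul hcα0.le]
      _ = ENNReal.ofReal cα * ∫⁻ y in Ioo (1/2:ℝ) x, ENNReal.ofReal ((1-y)^(β-m)) :=
          lintegral_const_mul _ (by fun_prop)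
      _ ≤ ENNReal.ofReal cα * ∫⁻ y in Ioo (0:ℝ) x, ENNReal.ofReal ((1-y)^(β-m)) := by
          gcongr
          norm_num
      _ ≤ ENNReal.ofReal cα * ENNReal.ofReal ((1-x)^(β-m+1)/(-(β-m)-1)) := by
          gcongr
          exact lintC (by linarith) hx0 hx1
      _ = C2 * ENNReal.ofReal ((1-x)^(β+1-m)) := by
          have hmβ : (0:ℝ) < m - β - 1 := by linarith
          rw [hC2, mul_assoc, ← ENNReal.ofReal_mul (one_div_nonneg.mpr hmβ.le)]
          congr 1
          rw [show (-(β-m)-1 : ℝ) = m-β-1 by ring, show (β-m+1 : ℝ) = β+1-m by ring,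
            div_eq_mul_one_div, mul_comm]
  -- Piece 3
  have hP3 : (∫⁻ y in Ico x 1 ∩ Ioi (1/2:ℝ), f y)
      ≤ C3 * ENNReal.ofReal ((1-x)^(β+1-m)) := by
    have hb : ∀ y ∈ Ico x 1 ∩ Ioi (1/2:ℝ), f y
        ≤ ENNReal.ofReal (cα * (1-x)^(-m) * (1-y)^β) := by
      rintro y ⟨⟨hyx, hy1⟩, hy2⟩
      apply ENNReal.ofReal_le_ofReal
      have h1y : (0:ℝ) ≤ 1 - y := by linarith
      have hxy0 : (0:ℝ) ≤ 1 - x*y := by nlinarith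
      have h1 : y^α ≤ cα := aux_half (le_of_lt hy2) (by linarith)
      have h2 : (1-x*y)^(-m) ≤ (1-x)^(-m) :=
        Real.rpow_le_rpow_of_nonpos hs0 (by nlinarith) (by linarith)
      calc y^α * (1-y)^β * (1-x*y)^(-m)
          ≤ cα * (1-y)^β * (1-x*y)^(-m) :=
            mul_le_mul_of_nonneg_right
              (mul_le_mul_of_nonneg_right h1 (Real.rpow_nonneg h1y _))
              (Real.rpow_nonneg hxy0 _)
        _ ≤ cα * (1-y)^β * (1-x)^(-m) :=
            mul_le_mul_of_nonneg_left h2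
              (mul_nonneg hcα0.le (Real.rpow_nonneg h1y _))
        _ = cα * (1-x)^(-m) * (1-y)^β := by ring
    calc (∫⁻ y in Ico x 1 ∩ Ioi (1/2:ℝ), f y)
        ≤ ∫⁻ y in Ico x 1 ∩ Ioi (1/2:ℝ), ENNReal.ofReal (cα * (1-x)^(-m) * (1-y)^β) :=
          setLIntegral_mono (by fun_prop) hb
      _ ≤ ∫⁻ y in Ico x 1, ENNReal.ofReal (cα * (1-x)^(-m) * (1-y)^β) :=
          lintegral_mono_set inter_subset_left
      _ = ∫⁻ y in Ioo x 1, ENNReal.ofReal (cα * (1-x)^(-m) * (1-y)^β) :=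
          (setLIntegral_congr Ioo_ae_eq_Ico).symm
      _ = ∫⁻ y in Ioo x 1, ENNReal.ofReal (cα * (1-x)^(-m)) * ENNReal.ofReal ((1-y)^β) := by
          apply setLIntegral_congr_fun_ae measurableSet_Ioo
          filter_upwards with y hy
          rw [← ENNReal.ofReal_mul (by positivity)]
      _ = ENNReal.ofReal (cα * (1-x)^(-m)) * ∫⁻ y in Ioo x 1, ENNReal.ofReal ((1-y)^β) :=
          lintegral_const_mul _ (by fun_prop)
      _ ≤ ENNReal.ofReal (cα * (1-x)^(-m)) * ENNReal.ofReal ((1-x)^(β+1)/(β+1)) := by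
          gcongr
          exact lintB hβ hx0.le hx1
      _ = C3 * ENNReal.ofReal ((1-x)^(β+1-m)) := by
          have hβ1 : (0:ℝ) < β + 1 := by linarith
          have hpow : (1-x)^(-m) * (1-x)^(β+1) = (1-x)^(β+1-m) := by
            rw [← Real.rpow_add hs0, show -m+(β+1) = β+1-m by ring]
          rw [hC3, ← ENNReal.ofReal_mul (mul_nonneg hcα0.le (Real.rpow_nonneg hs0.le _)),
            ← ENNReal.ofReal_mul hcα0.le,
            ← ENNReal.ofReal_mul (mul_nonneg hcα0.le (one_div_nonneg.mpr hβ1.le))]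
          congr 1
          calc cα * (1-x)^(-m) * ((1-x)^(β+1)/(β+1))
              = cα * (1/(β+1)) * ((1-x)^(-m) * (1-x)^(β+1)) := by ring
            _ = cα * (1/(β+1)) * (1-x)^(β+1-m) := by rw [hpow]
  calc (∫⁻ y in Ioo (0:ℝ) 1, f y)
      ≤ _ := hsplit
    _ ≤ C1 + C2 * ENNReal.ofReal ((1-x)^(β+1-m)) + C3 * ENNReal.ofReal ((1-x)^(β+1-m)) := by
        gcongr
    _ ≤ (C1 + C2 + C3) * ENNReal.ofReal ((1-x)^(β+1-m)) := by
        rw [add_mul, add_mul]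
        gcongr
        exact le_mul_of_one_le_right zero_le htarget1

lemma schur {p q s u m k j : ℝ} (hpq : p.HolderConjugate q)
    (A B : ℝ≥0∞)
    (hA : ∀ x ∈ Ioo (0:ℝ) 1, (∫⁻ y in Ioo (0:ℝ) 1,
        ENNReal.ofReal (y^k * (1-y)^(-s) * (1-x*y)^(-m)))
          ≤ A * ENNReal.ofReal ((1-x)^(-s+1-m)))
    (hB : ∀ y ∈ Ioo (0:ℝ) 1, (∫⁻ x in Ioo (0:ℝ) 1,
        ENNReal.ofReal (x^j * (1-x)^(-u-(s+m-1)*(p-1)) * (1-y*x)^(-m)))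
          ≤ B * ENNReal.ofReal ((1-y)^(-u-(s+m-1)*(p-1)+1-m)))
    (F : ℝ → ℝ≥0∞) (hF : Measurable F) :
    ∫⁻ x in Ioo (0:ℝ) 1, (∫⁻ y in Ioo (0:ℝ) 1, F y * ENNReal.ofReal (y^k/(1-x*y)^m))^p
        * ENNReal.ofReal (x^j*(1-x)^(-u))
      ≤ A^(p/q) * B * ∫⁻ y in Ioo (0:ℝ) 1,
          F y^p * ENNReal.ofReal (y^k*(1-y)^(-(u+(m-1)*p))) := by
  have hp0 : 0 < p := hpq.pos
  have hq0 : 0 < q := hpq.symm.pos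
  have hp1 : 1 < p := hpq.lt
  have hP0 : (0:ℝ) < p - 1 := by linarith
  have hpq2 : p/q = p - 1 := by
    exact hpq.div_conj_eq_sub_one
  have h1q : 1/p + 1/q = 1 := by rw [one_div, one_div]; exact hpq.inv_add_inv_eq_one
  -- measurability helpers
  have mKx : ∀ x : ℝ, Measurable (fun y : ℝ => ENNReal.ofReal (y^k/(1-x*y)^m)) := fun x =>
    ((measurable_id.pow measurable_const).div
      ((measurable_const.sub (measurable_const.mul measurable_id)).pow
        measurable_const)).ennreal_ofReal
  have mKy : ∀ y : ℝ, Measurable (fun x : ℝ => ENNReal.ofReal (y^k/(1-x*y)^m)) := fun y =>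
    (measurable_const.div
      ((measurable_const.sub (measurable_id.mul measurable_const)).pow
        measurable_const)).ennreal_ofReal
  have mψ : Measurable (fun y : ℝ => ENNReal.ofReal ((1-y)^(-(s/q)))) :=
    ((measurable_const.sub measurable_id).pow measurable_const).ennreal_ofReal
  have mψi : Measurable (fun y : ℝ => ENNReal.ofReal ((1-y)^(s/q))) :=
    ((measurable_const.sub measurable_id).pow measurable_const).ennreal_ofReal
  have mW : Measurable (fun x : ℝ => ENNReal.ofReal (x^j*(1-x)^(-u))) :=
    ((measurable_id.pow measurable_const).mul
      ((measurable_const.sub measurable_id).pow measurable_const)).ennreal_ofReal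
  have mΦq : Measurable (fun x : ℝ => (ENNReal.ofReal ((1-x)^(-(s+m-1))))^(p/q)) :=
    (((measurable_const.sub measurable_id).pow measurable_const).ennreal_ofReal).pow
      measurable_const
  -- Step 1 : pointwise Hölder + (A)
  have step1 : ∀ x ∈ Ioo (0:ℝ) 1,
      (∫⁻ y in Ioo (0:ℝ) 1, F y * ENNReal.ofReal (y^k/(1-x*y)^m))^p
          * ENNReal.ofReal (x^j*(1-x)^(-u))
        ≤ (A^(p/q) * (ENNReal.ofReal ((1-x)^(-(s+m-1))))^(p/q)
            * ENNReal.ofReal (x^j*(1-x)^(-u)))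
          * ∫⁻ y in Ioo (0:ℝ) 1,
              ENNReal.ofReal (y^k/(1-x*y)^m) * ENNReal.ofReal ((1-y)^(s/q))^p * F y^p := by
    rintro x ⟨hx0, hx1⟩
    have hsx : (0:ℝ) < 1 - x := by linarith
    have hsplit : ∀ᵐ (y:ℝ) ∂(volume.restrict (Ioo (0:ℝ) 1)),
        F y * ENNReal.ofReal (y^k/(1-x*y)^m)
          = (fun y => ENNReal.ofReal (y^k/(1-x*y)^m)^(1/p) * ENNReal.ofReal ((1-y)^(s/q)) * F y) y
            * (fun y => ENNReal.ofReal (y^k/(1-x*y)^m)^(1/q) * ENNReal.ofReal ((1-y)^(-(s/q)))) y := by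
      filter_upwards [ae_restrict_mem measurableSet_Ioo] with y hy
      obtain ⟨hy0, hy1⟩ := hy
      have h1y : (0:ℝ) < 1 - y := by linarith
      have hxy : (0:ℝ) < 1 - x*y := by nlinarith
      have hKpos : (0:ℝ) < y^k/(1-x*y)^m :=
        div_pos (Real.rpow_pos_of_pos hy0 _) (Real.rpow_pos_of_pos hxy _)
      have e1 : ENNReal.ofReal (y^k/(1-x*y)^m)^(1/p) * ENNReal.ofReal (y^k/(1-x*y)^m)^(1/q)
          = ENNReal.ofReal (y^k/(1-x*y)^m) := by
        rw [← ENNReal.rpow_add _ _ (ENNReal.ofReal_pos.mpr hKpos).ne' ENNReal.ofReal_ne_top,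
          h1q, ENNReal.rpow_one]
      have e2 : ENNReal.ofReal ((1-y)^(s/q)) * ENNReal.ofReal ((1-y)^(-(s/q))) = 1 := by
        rw [← ENNReal.ofReal_mul (Real.rpow_nonneg h1y.le _), ← Real.rpow_add h1y,
          add_neg_cancel, Real.rpow_zero, ENNReal.ofReal_one]
      calc F y * ENNReal.ofReal (y^k/(1-x*y)^m)
          = (ENNReal.ofReal (y^k/(1-x*y)^m)^(1/p) * ENNReal.ofReal (y^k/(1-x*y)^m)^(1/q))
            * ((ENNReal.ofReal ((1-y)^(s/q)) * ENNReal.ofReal ((1-y)^(-(s/q)))) * F y) := by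
            rw [e1, e2, one_mul, mul_comm]
        _ = _ := by ring
    have hm1 : AEMeasurable (fun y : ℝ =>
        ENNReal.ofReal (y^k/(1-x*y)^m)^(1/p) * ENNReal.ofReal ((1-y)^(s/q)) * F y)
        (volume.restrict (Ioo (0:ℝ) 1)) :=
      ((((mKx x).pow measurable_const).mul mψi).mul hF).aemeasurable
    have hm2 : AEMeasurable (fun y : ℝ =>
        ENNReal.ofReal (y^k/(1-x*y)^m)^(1/q) * ENNReal.ofReal ((1-y)^(-(s/q))))
        (volume.restrict (Ioo (0:ℝ) 1)) :=
      (((mKx x).pow measurable_const).mul mψ).aemeasurable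
    have ef1 : ∀ y : ℝ, (ENNReal.ofReal (y^k/(1-x*y)^m)^(1/p) * ENNReal.ofReal ((1-y)^(s/q))
        * F y)^p = ENNReal.ofReal (y^k/(1-x*y)^m) * ENNReal.ofReal ((1-y)^(s/q))^p * F y^p := by
      intro y
      rw [ENNReal.mul_rpow_of_nonneg _ _ hp0.le, ENNReal.mul_rpow_of_nonneg _ _ hp0.le,
        ← ENNReal.rpow_mul, one_div_mul_cancel hp0.ne', ENNReal.rpow_one]
    have ef2 : ∀ y : ℝ, (ENNReal.ofReal (y^k/(1-x*y)^m)^(1/q)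
        * ENNReal.ofReal ((1-y)^(-(s/q))))^q
        = ENNReal.ofReal (y^k/(1-x*y)^m) * ENNReal.ofReal ((1-y)^(-(s/q)))^q := by
      intro y
      rw [ENNReal.mul_rpow_of_nonneg _ _ hq0.le,
        ← ENNReal.rpow_mul, one_div_mul_cancel hq0.ne', ENNReal.rpow_one]
    have hX : (∫⁻ y in Ioo (0:ℝ) 1, F y * ENNReal.ofReal (y^k/(1-x*y)^m))
        ≤ (∫⁻ y in Ioo (0:ℝ) 1, ENNReal.ofReal (y^k/(1-x*y)^m)
              * ENNReal.ofReal ((1-y)^(s/q))^p * F y^p)^(1/p)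
          * (∫⁻ y in Ioo (0:ℝ) 1, ENNReal.ofReal (y^k/(1-x*y)^m)
              * ENNReal.ofReal ((1-y)^(-(s/q)))^q)^(1/q) := by
      rw [lintegral_congr_ae hsplit]
      refine le_trans (ENNReal.lintegral_mul_le_Lp_mul_Lq _ hpq hm1 hm2) (le_of_eq ?_)
      rw [lintegral_congr ef1, lintegral_congr ef2]
    have hA2 : (∫⁻ y in Ioo (0:ℝ) 1,
        ENNReal.ofReal (y^k/(1-x*y)^m) * ENNReal.ofReal ((1-y)^(-(s/q)))^q)
          ≤ A * ENNReal.ofReal ((1-x)^(-(s+m-1))) := by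
      have hcongr : (∫⁻ y in Ioo (0:ℝ) 1,
          ENNReal.ofReal (y^k/(1-x*y)^m) * ENNReal.ofReal ((1-y)^(-(s/q)))^q)
            = ∫⁻ y in Ioo (0:ℝ) 1, ENNReal.ofReal (y^k * (1-y)^(-s) * (1-x*y)^(-m)) := by
        apply setLIntegral_congr_fun_ae measurableSet_Ioo
        filter_upwards with y hy
        obtain ⟨hy0, hy1⟩ := hy
        have h1y : (0:ℝ) < 1 - y := by linarith
        have hxy : (0:ℝ) < 1 - x*y := by nlinarith
        rw [ENNReal.ofReal_rpow_of_pos (Real.rpow_pos_of_pos h1y _),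
          ← Real.rpow_mul h1y.le, show -(s/q)*q = -s by field_simp,
          ← ENNReal.ofReal_mul (by positivity)]
        congr 1
        rw [div_eq_mul_inv, ← Real.rpow_neg hxy.le]
        ring
      rw [hcongr, show -(s+m-1) = -s+1-m by ring]
      exact hA x ⟨hx0, hx1⟩
    calc (∫⁻ y in Ioo (0:ℝ) 1, F y * ENNReal.ofReal (y^k/(1-x*y)^m))^p
          * ENNReal.ofReal (x^j*(1-x)^(-u))
        ≤ ((∫⁻ y in Ioo (0:ℝ) 1, ENNReal.ofReal (y^k/(1-x*y)^m)
              * ENNReal.ofReal ((1-y)^(s/q))^p * F y^p)^(1/p)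
            * (∫⁻ y in Ioo (0:ℝ) 1, ENNReal.ofReal (y^k/(1-x*y)^m)
              * ENNReal.ofReal ((1-y)^(-(s/q)))^q)^(1/q))^p
          * ENNReal.ofReal (x^j*(1-x)^(-u)) :=
          mul_le_mul_left (ENNReal.rpow_le_rpow hX hp0.le) _
      _ ≤ ((∫⁻ y in Ioo (0:ℝ) 1, ENNReal.ofReal (y^k/(1-x*y)^m)
              * ENNReal.ofReal ((1-y)^(s/q))^p * F y^p)^(1/p)
            * (A * ENNReal.ofReal ((1-x)^(-(s+m-1))))^(1/q))^p
          * ENNReal.ofReal (x^j*(1-x)^(-u)) :=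
          mul_le_mul_left (ENNReal.rpow_le_rpow
            (mul_le_mul_right (ENNReal.rpow_le_rpow hA2 (by positivity)) _) hp0.le) _
      _ = (A^(p/q) * (ENNReal.ofReal ((1-x)^(-(s+m-1))))^(p/q)
            * ENNReal.ofReal (x^j*(1-x)^(-u)))
          * ∫⁻ y in Ioo (0:ℝ) 1,
              ENNReal.ofReal (y^k/(1-x*y)^m) * ENNReal.ofReal ((1-y)^(s/q))^p * F y^p := by
          rw [ENNReal.mul_rpow_of_nonneg _ _ hp0.le, ← ENNReal.rpow_mul,
            one_div_mul_cancel hp0.ne', ENNReal.rpow_one, ← ENNReal.rpow_mul,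
            ENNReal.mul_rpow_of_nonneg _ _ (by positivity : (0:ℝ) ≤ 1/q*p),
            show 1/q*p = p/q by ring]
          ring
  -- Step 2+3 : integrate in x, push constants inside, swap
  have step3 : (∫⁻ x in Ioo (0:ℝ) 1,
      (A^(p/q) * (ENNReal.ofReal ((1-x)^(-(s+m-1))))^(p/q)
        * ENNReal.ofReal (x^j*(1-x)^(-u)))
      * ∫⁻ y in Ioo (0:ℝ) 1,
          ENNReal.ofReal (y^k/(1-x*y)^m) * ENNReal.ofReal ((1-y)^(s/q))^p * F y^p)
      = ∫⁻ y in Ioo (0:ℝ) 1, ∫⁻ x in Ioo (0:ℝ) 1,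
          (A^(p/q) * (ENNReal.ofReal ((1-x)^(-(s+m-1))))^(p/q)
            * ENNReal.ofReal (x^j*(1-x)^(-u)))
          * (ENNReal.ofReal (y^k/(1-x*y)^m) * ENNReal.ofReal ((1-y)^(s/q))^p * F y^p) := by
    rw [← lintegral_lintegral_swap]
    · exact lintegral_congr fun x =>
        (lintegral_const_mul'' _ (((mKx x).mul (mψi.pow measurable_const)).mul
          (hF.pow measurable_const)).aemeasurable).symm
    · apply Measurable.aemeasurable
      apply Measurable.mul
      · exact (measurable_const.mul (mΦq.comp measurable_fst)).mul (mW.comp measurable_fst)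
      · refine Measurable.mul (Measurable.mul ?_ ?_) ?_
        · exact ((measurable_snd.pow measurable_const).div
            ((measurable_const.sub (measurable_fst.mul measurable_snd)).pow
              measurable_const)).ennreal_ofReal
        · exact (mψi.comp measurable_snd).pow measurable_const
        · exact (hF.comp measurable_snd).pow measurable_const
  -- Step 4+5+6 : inner x-integral bound, for each y
  have step456 : ∀ y ∈ Ioo (0:ℝ) 1,
      (∫⁻ x in Ioo (0:ℝ) 1,
          (A^(p/q) * (ENNReal.ofReal ((1-x)^(-(s+m-1))))^(p/q)
            * ENNReal.ofReal (x^j*(1-x)^(-u)))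
          * (ENNReal.ofReal (y^k/(1-x*y)^m) * ENNReal.ofReal ((1-y)^(s/q))^p * F y^p))
        ≤ (A^(p/q) * B) * (F y^p * ENNReal.ofReal (y^k*(1-y)^(-(u+(m-1)*p)))) := by
    rintro y ⟨hy0, hy1⟩
    have h1y : (0:ℝ) < 1 - y := by linarith
    have hcongr : ∀ x ∈ Ioo (0:ℝ) 1,
        (A^(p/q) * (ENNReal.ofReal ((1-x)^(-(s+m-1))))^(p/q)
          * ENNReal.ofReal (x^j*(1-x)^(-u)))
        * (ENNReal.ofReal (y^k/(1-x*y)^m) * ENNReal.ofReal ((1-y)^(s/q))^p * F y^p)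
        = (A^(p/q) * (ENNReal.ofReal ((1-y)^(s/q))^p * F y^p) * ENNReal.ofReal (y^k))
          * ENNReal.ofReal (x^j * (1-x)^(-u-(s+m-1)*(p-1)) * (1-y*x)^(-m)) := by
      rintro x ⟨hx0, hx1⟩
      have hsx : (0:ℝ) < 1 - x := by linarith
      have hxy : (0:ℝ) < 1 - x*y := by nlinarith
      have eΦ : (ENNReal.ofReal ((1-x)^(-(s+m-1))))^(p/q)
          = ENNReal.ofReal ((1-x)^(-((s+m-1)*(p-1)))) := by
        rw [ENNReal.ofReal_rpow_of_pos (Real.rpow_pos_of_pos hsx _),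
          ← Real.rpow_mul hsx.le, show -(s+m-1)*(p/q) = -((s+m-1)*(p-1)) by rw [hpq2]; ring]
      have ereal : (1-x)^(-((s+m-1)*(p-1))) * (x^j*(1-x)^(-u)) * (y^k/(1-x*y)^m)
          = y^k * (x^j * (1-x)^(-u-(s+m-1)*(p-1)) * (1-y*x)^(-m)) := by
        rw [show (1:ℝ)-y*x = 1-x*y by ring, div_eq_mul_inv, ← Real.rpow_neg hxy.le,
          show (-u-(s+m-1)*(p-1) : ℝ) = -((s+m-1)*(p-1)) + -u by ring,
          Real.rpow_add hsx]
        ring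
      have eK : ENNReal.ofReal ((1-x)^(-((s+m-1)*(p-1)))) * ENNReal.ofReal (x^j*(1-x)^(-u))
          * ENNReal.ofReal (y^k/(1-x*y)^m)
          = ENNReal.ofReal (y^k)
            * ENNReal.ofReal (x^j * (1-x)^(-u-(s+m-1)*(p-1)) * (1-y*x)^(-m)) := by
        rw [← ENNReal.ofReal_mul (Real.rpow_nonneg hsx.le _),
          ← ENNReal.ofReal_mul (mul_nonneg (Real.rpow_nonneg hsx.le _)
            (mul_nonneg (Real.rpow_nonneg hx0.le _) (Real.rpow_nonneg hsx.le _))),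
          ← ENNReal.ofReal_mul (Real.rpow_nonneg hy0.le _)]
        exact congrArg ENNReal.ofReal ereal
      rw [eΦ]
      calc A^(p/q) * ENNReal.ofReal ((1-x)^(-((s+m-1)*(p-1)))) * ENNReal.ofReal (x^j*(1-x)^(-u))
            * (ENNReal.ofReal (y^k/(1-x*y)^m) * ENNReal.ofReal ((1-y)^(s/q))^p * F y^p)
          = (ENNReal.ofReal ((1-x)^(-((s+m-1)*(p-1)))) * ENNReal.ofReal (x^j*(1-x)^(-u))
              * ENNReal.ofReal (y^k/(1-x*y)^m))
            * (A^(p/q) * (ENNReal.ofReal ((1-y)^(s/q))^p * F y^p)) := by ring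
        _ = (ENNReal.ofReal (y^k)
              * ENNReal.ofReal (x^j * (1-x)^(-u-(s+m-1)*(p-1)) * (1-y*x)^(-m)))
            * (A^(p/q) * (ENNReal.ofReal ((1-y)^(s/q))^p * F y^p)) := by rw [eK]
        _ = (A^(p/q) * (ENNReal.ofReal ((1-y)^(s/q))^p * F y^p) * ENNReal.ofReal (y^k))
          * ENNReal.ofReal (x^j * (1-x)^(-u-(s+m-1)*(p-1)) * (1-y*x)^(-m)) := by ring
    calc (∫⁻ x in Ioo (0:ℝ) 1,
          (A^(p/q) * (ENNReal.ofReal ((1-x)^(-(s+m-1))))^(p/q)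
            * ENNReal.ofReal (x^j*(1-x)^(-u)))
          * (ENNReal.ofReal (y^k/(1-x*y)^m) * ENNReal.ofReal ((1-y)^(s/q))^p * F y^p))
        = (A^(p/q) * (ENNReal.ofReal ((1-y)^(s/q))^p * F y^p) * ENNReal.ofReal (y^k))
          * ∫⁻ x in Ioo (0:ℝ) 1,
              ENNReal.ofReal (x^j * (1-x)^(-u-(s+m-1)*(p-1)) * (1-y*x)^(-m)) := by
          have mg : Measurable (fun x : ℝ =>
              ENNReal.ofReal (x^j * (1-x)^(-u-(s+m-1)*(p-1)) * (1-y*x)^(-m))) :=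
            (((measurable_id.pow measurable_const).mul
              ((measurable_const.sub measurable_id).pow measurable_const)).mul
              ((measurable_const.sub (measurable_const.mul measurable_id)).pow
                measurable_const)).ennreal_ofReal
          have e3 : (∫⁻ x in Ioo (0:ℝ) 1,
              (A^(p/q) * (ENNReal.ofReal ((1-x)^(-(s+m-1))))^(p/q)
                * ENNReal.ofReal (x^j*(1-x)^(-u)))
              * (ENNReal.ofReal (y^k/(1-x*y)^m) * ENNReal.ofReal ((1-y)^(s/q))^p * F y^p))
              = ∫⁻ x in Ioo (0:ℝ) 1,
                (A^(p/q) * (ENNReal.ofReal ((1-y)^(s/q))^p * F y^p) * ENNReal.ofReal (y^k))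
                * ENNReal.ofReal (x^j * (1-x)^(-u-(s+m-1)*(p-1)) * (1-y*x)^(-m)) := by
            apply setLIntegral_congr_fun_ae measurableSet_Ioo
            filter_upwards with x hx
            exact hcongr x hx
          rw [e3]
          exact lintegral_const_mul'' _ mg.aemeasurable
      _ ≤ (A^(p/q) * (ENNReal.ofReal ((1-y)^(s/q))^p * F y^p) * ENNReal.ofReal (y^k))
          * (B * ENNReal.ofReal ((1-y)^(-u-(s+m-1)*(p-1)+1-m))) :=
          mul_le_mul_right (hB y ⟨hy0, hy1⟩) _
      _ = (A^(p/q) * B) * (F y^p * ENNReal.ofReal (y^k*(1-y)^(-(u+(m-1)*p)))) := by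
          have eψ : ENNReal.ofReal ((1-y)^(s/q))^p = ENNReal.ofReal ((1-y)^(s*(p-1))) := by
            rw [ENNReal.ofReal_rpow_of_pos (Real.rpow_pos_of_pos h1y _),
              ← Real.rpow_mul h1y.le, show s/q*p = s*(p-1) by rw [← hpq2]; ring]
          have ecomb : ENNReal.ofReal ((1-y)^(s*(p-1))) * (ENNReal.ofReal (y^k)
              * ENNReal.ofReal ((1-y)^(-u-(s+m-1)*(p-1)+1-m)))
              = ENNReal.ofReal (y^k*(1-y)^(-(u+(m-1)*p))) := by
            rw [← ENNReal.ofReal_mul (Real.rpow_nonneg hy0.le _),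
              ← ENNReal.ofReal_mul (Real.rpow_nonneg h1y.le _)]
            congr 1
            rw [show (1-y)^(s*(p-1)) * (y^k * (1-y)^(-u-(s+m-1)*(p-1)+1-m))
                = y^k * ((1-y)^(s*(p-1)) * (1-y)^(-u-(s+m-1)*(p-1)+1-m)) from by ring,
              ← Real.rpow_add h1y,
              show s*(p-1) + (-u-(s+m-1)*(p-1)+1-m) = -(u+(m-1)*p) by ring]
          rw [eψ]
          trans (A^(p/q) * B) * (F y^p * (ENNReal.ofReal ((1-y)^(s*(p-1)))
            * (ENNReal.ofReal (y^k) * ENNReal.ofReal ((1-y)^(-u-(s+m-1)*(p-1)+1-m)))))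
          · ring
          · rw [ecomb]
  calc ∫⁻ x in Ioo (0:ℝ) 1,
        (∫⁻ y in Ioo (0:ℝ) 1, F y * ENNReal.ofReal (y^k/(1-x*y)^m))^p
          * ENNReal.ofReal (x^j*(1-x)^(-u))
      ≤ ∫⁻ x in Ioo (0:ℝ) 1,
          (A^(p/q) * (ENNReal.ofReal ((1-x)^(-(s+m-1))))^(p/q)
            * ENNReal.ofReal (x^j*(1-x)^(-u)))
          * ∫⁻ y in Ioo (0:ℝ) 1,
              ENNReal.ofReal (y^k/(1-x*y)^m) * ENNReal.ofReal ((1-y)^(s/q))^p * F y^p :=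
        setLIntegral_mono' measurableSet_Ioo step1
    _ = ∫⁻ y in Ioo (0:ℝ) 1, ∫⁻ x in Ioo (0:ℝ) 1,
          (A^(p/q) * (ENNReal.ofReal ((1-x)^(-(s+m-1))))^(p/q)
            * ENNReal.ofReal (x^j*(1-x)^(-u)))
          * (ENNReal.ofReal (y^k/(1-x*y)^m) * ENNReal.ofReal ((1-y)^(s/q))^p * F y^p) := step3
    _ ≤ ∫⁻ y in Ioo (0:ℝ) 1,
          (A^(p/q) * B) * (F y^p * ENNReal.ofReal (y^k*(1-y)^(-(u+(m-1)*p)))) :=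
        setLIntegral_mono' measurableSet_Ioo step456
    _ = A^(p/q) * B * ∫⁻ y in Ioo (0:ℝ) 1,
          F y^p * ENNReal.ofReal (y^k*(1-y)^(-(u+(m-1)*p))) :=
        lintegral_const_mul'' _ ((hF.pow measurable_const).mul
          (((measurable_id.pow measurable_const).mul
            ((measurable_const.sub measurable_id).pow measurable_const)).ennreal_ofReal)).aemeasurable

theorem stmt16 (p j k m u : ℝ) (hp1 : 1 < p) (hj : -1 < j) (hk : -1 < k)
    (hm : 0 < m) (hu1 : u < 1) (hu2 : 1 - m * p < u) :
    ∃ C : ℝ≥0∞, C ≠ ⊤ ∧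
      ∀ f : ℝ → ℂ, Measurable f →
        (∫⁻ x in Ioo (0:ℝ) 1,
            (∫⁻ y in Ioo (0:ℝ) 1,
                ENNReal.ofReal (‖f y‖ * y ^ k / (1 - x * y) ^ m)) ^ p *
              ENNReal.ofReal (x ^ j * (1 - x) ^ (-u))) ^ (1 / p) ≤
          C * (∫⁻ y in Ioo (0:ℝ) 1,
              ENNReal.ofReal (‖f y‖) ^ p *
                ENNReal.ofReal (y ^ k * (1 - y) ^ (-(u + (m - 1) * p)))) ^ (1 / p) := by
  have hp0 : (0:ℝ) < p := by linarith
  have hP0 : (0:ℝ) < p - 1 := by linarith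
  have hpq : p.HolderConjugate (p/(p-1)) := Real.HolderConjugate.conjExponent hp1
  set q : ℝ := p/(p-1) with hqdef
  -- choose the Schur exponent s
  have g1 : (1:ℝ)-m < 1 := by linarith
  have g2 : 1-m < (1-u)/(p-1) - (m-1) := by
    have : (0:ℝ) < (1-u)/(p-1) := div_pos (by linarith) hP0
    linarith
  have g3 : (1-m-u)/(p-1) - (m-1) < 1 := by
    have h : (1-m-u)/(p-1) < m := (div_lt_iff₀ hP0).mpr (by nlinarith)
    linarith
  have g4 : (1-m-u)/(p-1) - (m-1) < (1-u)/(p-1) - (m-1) := by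
    have : (1-m-u)/(p-1) < (1-u)/(p-1) := by
      rw [div_lt_div_iff₀ hP0 hP0]
      nlinarith [mul_pos hm hP0]
    linarith
  set L : ℝ := max (1-m) ((1-m-u)/(p-1) - (m-1)) with hLdef
  set U : ℝ := min 1 ((1-u)/(p-1) - (m-1)) with hUdef
  have hLU : L < U := max_lt (lt_min g1 g2) (lt_min g3 g4)
  set s : ℝ := (L+U)/2 with hsdef
  have hsL : L < s := by rw [hsdef]; linarith
  have hsU : s < U := by rw [hsdef]; linarith
  have hs1m : 1-m < s := lt_of_le_of_lt (le_max_left _ _) hsL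
  have hs1 : s < 1 := lt_of_lt_of_le hsU (min_le_left _ _)
  have hs3 : s < (1-u)/(p-1) - (m-1) := lt_of_lt_of_le hsU (min_le_right _ _)
  have hs4 : (1-m-u)/(p-1) - (m-1) < s := lt_of_le_of_lt (le_max_right _ _) hsL
  have hβB1 : -1 < -u-(s+m-1)*(p-1) := by
    have h := mul_lt_mul_of_pos_right hs3 hP0
    have e : ((1-u)/(p-1) - (m-1))*(p-1) = (1-u) - (m-1)*(p-1) := by
      rw [sub_mul, div_mul_cancel₀ _ hP0.ne']
    have h2 : s*(p-1) + (m-1)*(p-1) < 1-u := by linarith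
    have e2 : (s+m-1)*(p-1) = s*(p-1) + (m-1)*(p-1) := by ring
    linarith
  have hβB2 : -u-(s+m-1)*(p-1) < m-1 := by
    have h := mul_lt_mul_of_pos_right hs4 hP0
    have e : ((1-m-u)/(p-1) - (m-1))*(p-1) = (1-m-u) - (m-1)*(p-1) := by
      rw [sub_mul, div_mul_cancel₀ _ hP0.ne']
    have h2 : (1-m-u) - (m-1)*(p-1) < s*(p-1) := by linarith
    have e2 : (s+m-1)*(p-1) = s*(p-1) + (m-1)*(p-1) := by ring
    linarith
  obtain ⟨A, hAtop, hA⟩ := lemK (β := -s) (m := m) hk (by linarith) (by linarith)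
  obtain ⟨B, hBtop, hB⟩ := lemK (β := -u-(s+m-1)*(p-1)) (m := m) hj hβB1 hβB2
  refine ⟨(A^(p/q) * B)^(1/p), ?_, ?_⟩
  · apply ENNReal.rpow_ne_top_of_nonneg (by positivity)
    exact ENNReal.mul_ne_top (ENNReal.rpow_ne_top_of_nonneg (by positivity) hAtop) hBtop
  intro f hf
  have hFmeas : Measurable (fun y : ℝ => ENNReal.ofReal (‖f y‖)) :=
    (hf.norm).ennreal_ofReal
  have main : ∫⁻ x in Ioo (0:ℝ) 1,
      (∫⁻ y in Ioo (0:ℝ) 1, ENNReal.ofReal (‖f y‖)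
        * ENNReal.ofReal (y^k/(1-x*y)^m))^p * ENNReal.ofReal (x^j*(1-x)^(-u))
      ≤ A^(p/q) * B * ∫⁻ y in Ioo (0:ℝ) 1,
          (ENNReal.ofReal (‖f y‖))^p
            * ENNReal.ofReal (y^k*(1-y)^(-(u+(m-1)*p))) :=
    schur hpq A B hA hB _ hFmeas
  have hrw : (∫⁻ x in Ioo (0:ℝ) 1,
      (∫⁻ y in Ioo (0:ℝ) 1,
          ENNReal.ofReal (‖f y‖ * y ^ k / (1 - x * y) ^ m)) ^ p *
        ENNReal.ofReal (x ^ j * (1 - x) ^ (-u)))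
      = ∫⁻ x in Ioo (0:ℝ) 1,
      (∫⁻ y in Ioo (0:ℝ) 1, ENNReal.ofReal (‖f y‖)
        * ENNReal.ofReal (y^k/(1-x*y)^m))^p * ENNReal.ofReal (x^j*(1-x)^(-u)) := by
    apply lintegral_congr fun x => ?_
    rw [show (∫⁻ y in Ioo (0:ℝ) 1,
        ENNReal.ofReal (‖f y‖ * y ^ k / (1 - x * y) ^ m))
        = ∫⁻ y in Ioo (0:ℝ) 1, ENNReal.ofReal (‖f y‖)
          * ENNReal.ofReal (y^k/(1-x*y)^m) from
      lintegral_congr fun y => by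
        rw [mul_div_assoc, ENNReal.ofReal_mul (norm_nonneg _)]]
  calc (∫⁻ x in Ioo (0:ℝ) 1,
      (∫⁻ y in Ioo (0:ℝ) 1,
          ENNReal.ofReal (‖f y‖ * y ^ k / (1 - x * y) ^ m)) ^ p *
        ENNReal.ofReal (x ^ j * (1 - x) ^ (-u))) ^ (1/p)
      = (∫⁻ x in Ioo (0:ℝ) 1,
        (∫⁻ y in Ioo (0:ℝ) 1, ENNReal.ofReal (‖f y‖)
          * ENNReal.ofReal (y^k/(1-x*y)^m))^p
          * ENNReal.ofReal (x^j*(1-x)^(-u))) ^ (1/p) := by rw [hrw]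
    _ ≤ (A^(p/q) * B * ∫⁻ y in Ioo (0:ℝ) 1,
          (ENNReal.ofReal (‖f y‖))^p
            * ENNReal.ofReal (y^k*(1-y)^(-(u+(m-1)*p)))) ^ (1/p) :=
        ENNReal.rpow_le_rpow main (by positivity)
    _ = (A^(p/q) * B)^(1/p) * (∫⁻ y in Ioo (0:ℝ) 1,
          ENNReal.ofReal (‖f y‖) ^ p *
            ENNReal.ofReal (y ^ k * (1 - y) ^ (-(u + (m - 1) * p)))) ^ (1/p) := by
        rw [ENNReal.mul_rpow_of_nonneg _ _ (by positivity)]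
end

section
/- Let f : 𝔻 → ℂ be integrable with respect to area measure on 𝔻 and let n ≥ 0 be an integer. Then 𝒫f is analytic on 𝔻 and for every z ∈ 𝔻, its n-th complex derivative satisfies (𝒫f)^{(n)}(z) = ((n+1)!/π) ∫_𝔻 f(w) w̄ⁿ / (1 − w̄ z)^{2+n} dA(w). -/
open MeasureTheory Set

namespace Stmt17Aux

noncomputable def G (f : ℂ → ℂ) (n : ℕ) (z : ℂ) : ℂ :=
  ∫ w in Metric.ball (0 : ℂ) 1,
    f w * ((starRingEnd ℂ) w) ^ n / (1 - (starRingEnd ℂ) w * z) ^ (2 + n)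

lemma denom_lb {w z : ℂ} (hw : ‖w‖ ≤ 1) {r : ℝ} (hz : ‖z‖ ≤ r) (hr : r < 1) :
    1 - r ≤ ‖(1 : ℂ) - (starRingEnd ℂ) w * z‖ := by
  have h1 : ‖(starRingEnd ℂ) w * z‖ ≤ r := by
    rw [norm_mul, RCLike.norm_conj]
    calc ‖w‖ * ‖z‖ ≤ 1 * r := by
          apply mul_le_mul hw hz (norm_nonneg _) zero_le_one
      _ = r := one_mul r
  calc 1 - r ≤ 1 - ‖(starRingEnd ℂ) w * z‖ := by linarith
    _ ≤ ‖(1 : ℂ)‖ - ‖(starRingEnd ℂ) w * z‖ := by simp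
    _ ≤ ‖(1 : ℂ) - (starRingEnd ℂ) w * z‖ := norm_sub_norm_le _ _

lemma denom_ne {w z : ℂ} (hw : ‖w‖ ≤ 1) (hz : ‖z‖ < 1) :
    (1 : ℂ) - (starRingEnd ℂ) w * z ≠ 0 := by
  have := denom_lb hw (le_refl ‖z‖) hz
  intro h
  rw [h, norm_zero] at this
  linarith

lemma meas_aux (f : ℂ → ℂ) (hint : IntegrableOn f (Metric.ball (0 : ℂ) 1) volume)
    (n : ℕ) (z : ℂ) :
    AEStronglyMeasurable
      (fun w => f w * ((starRingEnd ℂ) w) ^ n / (1 - (starRingEnd ℂ) w * z) ^ (2 + n))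
      (volume.restrict (Metric.ball (0 : ℂ) 1)) := by
  rw [aestronglyMeasurable_iff_aemeasurable]
  exact (hint.aestronglyMeasurable.aemeasurable.mul
      ((Complex.continuous_conj.pow n).measurable.aemeasurable)).div
    (((continuous_const.sub (Complex.continuous_conj.mul continuous_const)).pow
      (2 + n)).measurable.aemeasurable)

lemma norm_integrand_le (f : ℂ → ℂ) (n : ℕ) {w z : ℂ} (hw : ‖w‖ ≤ 1) {r : ℝ}
    (hz : ‖z‖ ≤ r) (hr : r < 1) :
    ‖f w * ((starRingEnd ℂ) w) ^ n / (1 - (starRingEnd ℂ) w * z) ^ (2 + n)‖ ≤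
      (1 - r)⁻¹ ^ (2 + n) * ‖f w‖ := by
  have hlb := denom_lb hw hz hr
  have hpos : (0:ℝ) < 1 - r := by linarith
  rw [norm_div, norm_mul, norm_pow, norm_pow, RCLike.norm_conj]
  have h1 : ‖f w‖ * ‖w‖ ^ n ≤ ‖f w‖ := by
    calc ‖f w‖ * ‖w‖ ^ n ≤ ‖f w‖ * 1 ^ n := by
          apply mul_le_mul_of_nonneg_left (pow_le_pow_left₀ (norm_nonneg _) hw n) (norm_nonneg _)
      _ = ‖f w‖ := by simp
  have h2 : (1 - r) ^ (2 + n) ≤ ‖(1 : ℂ) - (starRingEnd ℂ) w * z‖ ^ (2 + n) :=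
    pow_le_pow_left₀ hpos.le hlb _
  have h3 : (0:ℝ) < (1 - r) ^ (2 + n) := pow_pos hpos _
  rw [div_le_iff₀ (lt_of_lt_of_le h3 h2)]
  calc ‖f w‖ * ‖w‖ ^ n ≤ ‖f w‖ := h1
    _ = ((1 - r)⁻¹ ^ (2 + n) * ‖f w‖) * (1 - r) ^ (2 + n) := by
        rw [inv_pow, mul_comm ((1 - r) ^ (2 + n))⁻¹, mul_assoc, inv_mul_cancel₀ h3.ne', mul_one]
    _ ≤ ((1 - r)⁻¹ ^ (2 + n) * ‖f w‖) * ‖(1 : ℂ) - (starRingEnd ℂ) w * z‖ ^ (2 + n) := by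
        apply mul_le_mul_of_nonneg_left h2
        positivity

lemma integrable_aux (f : ℂ → ℂ) (hint : IntegrableOn f (Metric.ball (0 : ℂ) 1) volume)
    (n : ℕ) {z : ℂ} {r : ℝ} (hz : ‖z‖ ≤ r) (hr : r < 1) :
    Integrable
      (fun w => f w * ((starRingEnd ℂ) w) ^ n / (1 - (starRingEnd ℂ) w * z) ^ (2 + n))
      (volume.restrict (Metric.ball (0 : ℂ) 1)) := by
  apply Integrable.mono' ((hint.norm.const_mul ((1 - r)⁻¹ ^ (2 + n))))
    (meas_aux f hint n z)
  filter_upwards [ae_restrict_mem measurableSet_ball] with w hw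
  exact norm_integrand_le f n (le_of_lt (by simpa using hw)) hz hr

/-- The key derivative lemma. -/
lemma key (f : ℂ → ℂ) (hint : IntegrableOn f (Metric.ball (0 : ℂ) 1) volume) (n : ℕ)
    {z₀ : ℂ} (hz₀ : z₀ ∈ Metric.ball (0 : ℂ) 1) :
    HasDerivAt (G f n) (((2 + n : ℕ) : ℂ) * G f (n + 1) z₀) z₀ := by
  have hz₀' : ‖z₀‖ < 1 := by simpa using hz₀
  set r : ℝ := (1 + ‖z₀‖) / 2 with hrdef
  have hr : r < 1 := by rw [hrdef]; linarith
  set ε : ℝ := (1 - ‖z₀‖) / 2 with hεdef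
  have hε : 0 < ε := by rw [hεdef]; linarith
  have hball : ∀ z ∈ Metric.ball z₀ ε, ‖z‖ ≤ r := by
    intro z hz
    rw [Metric.mem_ball, dist_eq_norm] at hz
    calc ‖z‖ = ‖z - z₀ + z₀‖ := by ring_nf
      _ ≤ ‖z - z₀‖ + ‖z₀‖ := norm_add_le _ _
      _ ≤ r := by rw [hrdef]; linarith
  set F : ℂ → ℂ → ℂ := fun z w =>
    f w * ((starRingEnd ℂ) w) ^ n / (1 - (starRingEnd ℂ) w * z) ^ (2 + n) with hF
  set F' : ℂ → ℂ → ℂ := fun z w =>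
    ((2 + n : ℕ) : ℂ) *
      (f w * ((starRingEnd ℂ) w) ^ (n + 1) / (1 - (starRingEnd ℂ) w * z) ^ (2 + (n + 1)))
    with hF'
  have main := hasDerivAt_integral_of_dominated_loc_of_deriv_le (F := F) (F' := F')
    (μ := volume.restrict (Metric.ball (0 : ℂ) 1)) (x₀ := z₀)
    (bound := fun w => ((2 + n : ℕ) : ℝ) * ((1 - r)⁻¹ ^ (2 + (n + 1)) * ‖f w‖)) (s := Metric.ball z₀ ε) (Metric.ball_mem_nhds z₀ hε)
    (Filter.Eventually.of_forall fun z => meas_aux f hint n z)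
    (integrable_aux f hint n (hball z₀ (Metric.mem_ball_self hε)) hr)
    ?_ ?_ ?_ ?_
  · have heq : (∫ w in Metric.ball (0 : ℂ) 1, F' z₀ w) =
        ((2 + n : ℕ) : ℂ) * G f (n + 1) z₀ := by
      rw [hF']
      rw [integral_const_mul]
      rfl
    rw [← heq]
    exact main.2
  · -- measurability of F' z₀
    exact (meas_aux f hint (n + 1) z₀).const_mul _
  · -- bound
    filter_upwards [ae_restrict_mem measurableSet_ball] with w hw
    intro z hz
    have hw1 : ‖w‖ ≤ 1 := le_of_lt (by simpa using hw)
    rw [hF']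
    simp only [norm_mul, Complex.norm_natCast]
    apply mul_le_mul_of_nonneg_left _ (by positivity)
    exact norm_integrand_le f (n + 1) hw1 (hball z hz) hr
  · -- bound integrable
    exact (hint.norm.const_mul _).const_mul _
  · -- differentiability
    filter_upwards [ae_restrict_mem measurableSet_ball] with w hw
    intro z hz
    have hw1 : ‖w‖ ≤ 1 := le_of_lt (by simpa using hw)
    have hzlt : ‖z‖ < 1 := lt_of_le_of_lt (hball z hz) hr
    have hne : (1 : ℂ) - (starRingEnd ℂ) w * z ≠ 0 := denom_ne hw1 hzlt
    have hu : HasDerivAt (fun z : ℂ => 1 - (starRingEnd ℂ) w * z) (-(starRingEnd ℂ) w) z := by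
      simpa using ((hasDerivAt_id z).const_mul ((starRingEnd ℂ) w)).const_sub 1
    set m : ℤ := -((2 + n : ℕ) : ℤ) with hmdef
    have hzp := (hasDerivAt_zpow m (1 - (starRingEnd ℂ) w * z) (Or.inl hne)).comp z hu
    have hzp2 := hzp.const_mul (f w * ((starRingEnd ℂ) w) ^ n)
    have hfun : (fun x => F x w) = fun x =>
        f w * ((starRingEnd ℂ) w) ^ n * (1 - (starRingEnd ℂ) w * x) ^ m := by
      funext x
      simp only [hF]
      rw [div_eq_mul_inv, ← zpow_natCast ((1 - (starRingEnd ℂ) w * x)) (2 + n), ← zpow_neg]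
    rw [hfun]
    refine hzp2.congr_deriv ?_
    have hm1 : m - 1 = -((2 + (n + 1) : ℕ) : ℤ) := by rw [hmdef]; push_cast; ring
    have hpw : (1 - (starRingEnd ℂ) w * z) ^ (m - 1) =
        ((1 - (starRingEnd ℂ) w * z) ^ (2 + (n + 1)))⁻¹ := by
      rw [hm1, zpow_neg, zpow_natCast]
    simp only [hF', Function.comp]
    rw [hpw, div_eq_mul_inv, hmdef]
    push_cast
    ring

lemma iter (f : ℂ → ℂ) (hint : IntegrableOn f (Metric.ball (0 : ℂ) 1) volume) (n : ℕ) :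
    ∀ z ∈ Metric.ball (0 : ℂ) 1,
      iteratedDeriv n (bergman f) z =
        ((Nat.factorial (n + 1) : ℂ) / (Real.pi : ℂ)) * G f n z := by
  induction n with
  | zero =>
    intro z hz
    simp only [iteratedDeriv_zero, Nat.factorial, bergman, G]
    norm_num
  | succ n ih =>
    intro z hz
    rw [iteratedDeriv_succ]
    have hEq : iteratedDeriv n (bergman f) =ᶠ[nhds z]
        fun z => ((Nat.factorial (n + 1) : ℂ) / (Real.pi : ℂ)) * G f n z := by
      filter_upwards [Metric.isOpen_ball.mem_nhds hz] with x hx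
      exact ih x hx
    rw [hEq.deriv_eq]
    have hd := (key f hint n hz).const_mul ((Nat.factorial (n + 1) : ℂ) / (Real.pi : ℂ))
    rw [hd.deriv]
    have hfac : ((n + 1 + 1).factorial : ℂ) = ((2 + n : ℕ) : ℂ) * ((n + 1).factorial : ℂ) := by
      rw [Nat.factorial_succ]
      push_cast
      ring
    rw [hfac]
    ring

end Stmt17Aux

theorem stmt17 (f : ℂ → ℂ)
    (hint : IntegrableOn f (Metric.ball (0 : ℂ) 1) volume) (n : ℕ) :
    AnalyticOnNhd ℂ (bergman f) (Metric.ball (0 : ℂ) 1) ∧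
    ∀ z ∈ Metric.ball (0 : ℂ) 1,
      iteratedDeriv n (bergman f) z =
        ((Nat.factorial (n + 1) : ℂ) / (Real.pi : ℂ)) *
          ∫ w in Metric.ball (0 : ℂ) 1,
            f w * ((starRingEnd ℂ) w) ^ n / (1 - (starRingEnd ℂ) w * z) ^ (2 + n) := by
  constructor
  · apply DifferentiableOn.analyticOnNhd _ Metric.isOpen_ball
    intro z hz
    have h0 : ∀ x ∈ Metric.ball (0 : ℂ) 1,
        iteratedDeriv 0 (bergman f) x =
          ((Nat.factorial 1 : ℂ) / (Real.pi : ℂ)) * Stmt17Aux.G f 0 x :=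
      Stmt17Aux.iter f hint 0
    have hEq : bergman f =ᶠ[nhds z]
        fun x => ((Nat.factorial 1 : ℂ) / (Real.pi : ℂ)) * Stmt17Aux.G f 0 x := by
      filter_upwards [Metric.isOpen_ball.mem_nhds hz] with x hx
      simpa using h0 x hx
    have hd := (Stmt17Aux.key f hint 0 hz).const_mul ((Nat.factorial 1 : ℂ) / (Real.pi : ℂ))
    exact (hd.differentiableAt.congr_of_eventuallyEq hEq).differentiableWithinAt
  · exact Stmt17Aux.iter f hint n
end

section
/- There exist a strictly increasing sequence of real numbers b₀ = 0 < b₁ < b₂ < … with bₙ < 1 for all n and bₙ → 1 as n → ∞, and a strictly increasing sequence of non-negative integers m₁ < m₂ < …, such that for every n ≥ 1, ∫_{b_{n−1}}^{b_n} (m_n + 1) r^{m_n + 1} dr ≥ 1/4. -/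
open MeasureTheory Set Filter

noncomputable def bseq (n : ℕ) : ℝ := if n = 0 then 0 else (3/4 : ℝ) ^ ((1/16 : ℝ) ^ n)

lemma bseq_of_ne {j : ℕ} (hj : j ≠ 0) : bseq j = (3/4 : ℝ) ^ ((1/16 : ℝ) ^ j) :=
  if_neg hj

lemma bseq_pow (j n : ℕ) (hj : j ≠ 0) :
    bseq j ^ (16 ^ n : ℕ) = (3/4 : ℝ) ^ ((1/16 : ℝ) ^ j * (16 : ℝ) ^ n) := by
  rw [bseq_of_ne hj, ← Real.rpow_natCast ((3/4 : ℝ) ^ ((1/16 : ℝ) ^ j)) (16 ^ n),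
    ← Real.rpow_mul (by norm_num : (0:ℝ) ≤ 3/4)]
  push_cast
  ring_nf

theorem stmt19 :
    ∃ (b : ℕ → ℝ) (m : ℕ → ℕ),
      b 0 = 0 ∧ StrictMono b ∧ (∀ n, b n < 1) ∧
      Tendsto b atTop (nhds 1) ∧
      (∀ n : ℕ, 1 ≤ n → m n < m (n + 1)) ∧
      ∀ n : ℕ, 1 ≤ n →
        (1 : ℝ) / 4 ≤ ∫ r in (b (n - 1))..(b n), ((m n : ℝ) + 1) * r ^ (m n + 1) := by
  refine ⟨bseq, fun n => 16 ^ n - 2, by simp [bseq], ?_, ?_, ?_, ?_, ?_⟩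
  · -- StrictMono
    apply strictMono_nat_of_lt_succ
    intro n
    rcases Nat.eq_zero_or_pos n with h | h
    · subst h
      rw [show bseq 0 = 0 from if_pos rfl, show (0:ℕ)+1 = 1 from rfl,
        bseq_of_ne one_ne_zero]
      exact Real.rpow_pos_of_pos (by norm_num) _
    · rw [bseq_of_ne h.ne', bseq_of_ne (Nat.succ_ne_zero n)]
      apply Real.rpow_lt_rpow_of_exponent_gt (by norm_num) (by norm_num)
      exact pow_lt_pow_right_of_lt_one₀ (by norm_num) (by norm_num) (Nat.lt_succ_self n)
  · -- bounded by 1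
    intro n
    rcases Nat.eq_zero_or_pos n with h | h
    · simp [bseq, h]
    · rw [bseq_of_ne h.ne']
      exact Real.rpow_lt_one (by norm_num) (by norm_num) (by positivity)
  · -- Tendsto
    have h1 : Tendsto (fun n : ℕ => ((1/16 : ℝ)) ^ n) atTop (nhds 0) :=
      tendsto_pow_atTop_nhds_zero_of_lt_one (by norm_num) (by norm_num)
    have h2 : Tendsto (fun n : ℕ => (3/4 : ℝ) ^ ((1/16 : ℝ) ^ n)) atTop (nhds 1) := by
      have hc : ContinuousAt (fun x : ℝ => (3/4 : ℝ) ^ x) 0 :=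
        Real.continuousAt_const_rpow (by norm_num)
      have := hc.tendsto.comp h1
      simpa [Function.comp_def] using this
    refine h2.congr' ?_
    filter_upwards [eventually_ge_atTop 1] with n hn
    rw [bseq_of_ne (by omega : n ≠ 0)]
  · -- m strict mono for n ≥ 1
    intro n _
    show 16 ^ n - 2 < 16 ^ (n + 1) - 2
    have h1 : (1:ℕ) ≤ 16 ^ n := Nat.one_le_pow _ _ (by norm_num)
    have h2 : (16:ℕ) ^ n < 16 ^ (n + 1) :=
      Nat.pow_lt_pow_right (by norm_num) (Nat.lt_succ_self n)
    omega
  · -- integral bound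
    intro n hn
    have hk16 : (16:ℕ) ≤ 16 ^ n := by
      calc (16:ℕ) = 16 ^ 1 := by norm_num
      _ ≤ 16 ^ n := Nat.pow_le_pow_right (by norm_num) hn
    show (1 : ℝ) / 4 ≤ ∫ r in (bseq (n - 1))..(bseq n),
        (((16 ^ n - 2 : ℕ) : ℝ) + 1) * r ^ ((16 ^ n - 2 : ℕ) + 1)
    set m : ℕ := 16 ^ n - 2 with hm
    have hm2 : m + 2 = 16 ^ n := by omega
    rw [intervalIntegral.integral_const_mul, integral_pow]
    have hb : bseq n ^ (m + 1 + 1) = 3/4 := by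
      have h' : m + 1 + 1 = 16 ^ n := by omega
      rw [h', bseq_pow n n (by omega)]
      have he : (1/16 : ℝ) ^ n * (16 : ℝ) ^ n = 1 := by
        rw [← mul_pow]; norm_num
      rw [he, Real.rpow_one]
    have ha : bseq (n - 1) ^ (m + 1 + 1) ≤ 81/256 := by
      have hmm : m + 1 + 1 = 16 ^ n := by omega
      rcases Nat.eq_or_lt_of_le hn with h | h
      · have h0 : bseq (n - 1) = 0 := by
          rw [show n - 1 = 0 by omega]; simp [bseq]
        rw [h0, zero_pow (by omega : m + 1 + 1 ≠ 0)]
        norm_num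
      · obtain ⟨p, rfl⟩ : ∃ p, n = p + 1 := ⟨n - 1, by omega⟩
        have hp : p ≠ 0 := by omega
        rw [hmm, show p + 1 - 1 = p from rfl, bseq_pow p (p + 1) hp]
        have he : (1/16 : ℝ) ^ p * (16 : ℝ) ^ (p + 1) = 16 := by
          rw [pow_succ, ← mul_assoc, ← mul_pow]; norm_num
        rw [he, show (16:ℝ) = ((16:ℕ):ℝ) by norm_num, Real.rpow_natCast]
        calc (3/4 : ℝ) ^ (16:ℕ) ≤ (3/4 : ℝ) ^ (4:ℕ) :=
          pow_le_pow_of_le_one (by norm_num) (by norm_num) (by norm_num)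
        _ ≤ 81/256 := by norm_num
    rw [hb]
    set A : ℝ := bseq (n - 1) ^ (m + 1 + 1) with hA
    have hK16 : (16:ℝ) ≤ ((16:ℝ)) ^ n := by
      calc (16:ℝ) = ((16:ℕ):ℝ) := by norm_num
      _ ≤ ((16^n : ℕ):ℝ) := by exact_mod_cast hk16
      _ = (16:ℝ)^n := by push_cast; ring
    set K : ℝ := (16:ℝ) ^ n with hKdef
    have hKcast : ((m:ℝ) + 1) + 1 = K := by
      have : ((m + 2 : ℕ) : ℝ) = ((16 ^ n : ℕ) : ℝ) := by rw [hm2]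
      push_cast at this
      rw [hKdef]; linarith
    have hKpos : (0:ℝ) < K := by linarith
    have key : (1:ℝ)/4 ≤ (K - 1) * ((3/4 - A) / K) := by
      rw [mul_div_assoc', le_div_iff₀ hKpos]
      nlinarith [mul_le_mul_of_nonneg_left ha (by linarith : (0:ℝ) ≤ K - 1)]
    have heq : ((m:ℝ) + 1) * ((3/4 - A) / ((m + 1 : ℕ) + 1 : ℝ))
        = (K - 1) * ((3/4 - A) / K) := by
      push_cast
      rw [show ((m:ℝ) + 1 + 1) = K from hKcast, show ((m:ℝ) + 1) = K - 1 by linarith]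
    rw [heq]
    exact key
end
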